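/- arXiv:2602.12807 — 3 statements merged into one kernel-verified Lean document; each statement's English description precedes it below -/
import Mathlib

section
/- If the control problem has the approximation property at a point x ∈ Σ, then Γ^{opt}[x] has the closed graph property: for every sequence x_n ∈ Σ with x_n → x and every sequence of optimal trajectories (y_n,α_n) ∈ Γ^{opt}[x_n] such that y_n converges uniformly on [0,T] to a curve y, there exists a measurable α such that (y,α) ∈ Γ^{opt}[x]. -/
open MeasureTheory Set Filter Topology

noncomputable section

/-- Squared Euclidean norm on ℝ². -/
def sq2 (v : ℝ × ℝ) : ℝ := v.1 ^ 2 + v.2 ^ 2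

/-- Euclidean norm on ℝ². -/
def enorm2 (v : ℝ × ℝ) : ℝ := Real.sqrt (sq2 v)

/-- `(y, α)` is an admissible trajectory for the Grushin-type dynamics on `[t,T]`,
starting from `x` and constrained to the set `S`:  `y ∈ W^{1,1}`, `α` measurable,
`y₁' = α₁`, `y₂' = |y₁|^ν α₂` a.e. (in integral form), `y(t) = x`, `y(s) ∈ S`. -/
def Admissible (ν : ℝ) (S : Set (ℝ × ℝ)) (t T : ℝ) (x : ℝ × ℝ)
    (y α : ℝ → ℝ × ℝ) : Prop :=
  Measurable α ∧
  IntervalIntegrable (fun τ => (α τ).1) volume t T ∧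
  IntervalIntegrable (fun τ => |(y τ).1| ^ ν * (α τ).2) volume t T ∧
  (∀ s ∈ Icc t T, (y s).1 = x.1 + ∫ τ in t..s, (α τ).1) ∧
  (∀ s ∈ Icc t T, (y s).2 = x.2 + ∫ τ in t..s, |(y τ).1| ^ ν * (α τ).2) ∧
  (∀ s ∈ Icc t T, y s ∈ S)

/-- `α ∈ L²(t,T)`. -/
def InL2 (α : ℝ → ℝ × ℝ) (t T : ℝ) : Prop :=
  IntervalIntegrable (fun τ => sq2 (α τ)) volume t T

/-- The cost `J_t(x;(y,α))`. -/
def cost (l : ℝ × ℝ → ℝ → ℝ) (g : ℝ × ℝ → ℝ) (t T : ℝ) (y α : ℝ → ℝ × ℝ) : ℝ :=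
  (∫ τ in t..T, (sq2 (α τ) / 2 + l (y τ) τ)) + g (y T)

/-- `Γ_t[x]`: admissible trajectories from `(x,t)` with finite cost (`α ∈ L²`). -/
def Gamma (ν : ℝ) (S : Set (ℝ × ℝ)) (t T : ℝ) (x : ℝ × ℝ) :
    Set ((ℝ → ℝ × ℝ) × (ℝ → ℝ × ℝ)) :=
  {p | Admissible ν S t T x p.1 p.2 ∧ InL2 p.2 t T}

/-- `Γ_t^{opt}[x]`: optimal trajectories. -/
def GammaOpt (ν : ℝ) (S : Set (ℝ × ℝ)) (l : ℝ × ℝ → ℝ → ℝ) (g : ℝ × ℝ → ℝ)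
    (t T : ℝ) (x : ℝ × ℝ) : Set ((ℝ → ℝ × ℝ) × (ℝ → ℝ × ℝ)) :=
  {p | p ∈ Gamma ν S t T x ∧
    ∀ q ∈ Gamma ν S t T x, cost l g t T p.1 p.2 ≤ cost l g t T q.1 q.2}

/-- The value function `u(x,t)`. -/
def valueFun (ν : ℝ) (S : Set (ℝ × ℝ)) (l : ℝ × ℝ → ℝ → ℝ) (g : ℝ × ℝ → ℝ)
    (T : ℝ) (x : ℝ × ℝ) (t : ℝ) : ℝ :=
  sInf ((fun p => cost l g t T p.1 p.2) '' Gamma ν S t T x)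

/-- Closed graph property of `Γ_t^{opt}[x]`. -/
def ClosedGraphAt (ν : ℝ) (S : Set (ℝ × ℝ)) (l : ℝ × ℝ → ℝ → ℝ) (g : ℝ × ℝ → ℝ)
    (t T : ℝ) (x : ℝ × ℝ) : Prop :=
  ∀ (xs : ℕ → ℝ × ℝ) (ys as : ℕ → ℝ → ℝ × ℝ) (y : ℝ → ℝ × ℝ),
    (∀ n, xs n ∈ S) → Tendsto xs atTop (𝓝 x) →
    (∀ n, (ys n, as n) ∈ GammaOpt ν S l g t T (xs n)) →
    TendstoUniformlyOn ys y atTop (Icc t T) →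
    ∃ α, (y, α) ∈ GammaOpt ν S l g t T x

/-- Approximation property at `x` for initial time `t`. -/
def ApproxProperty (ν : ℝ) (S : Set (ℝ × ℝ)) (l : ℝ × ℝ → ℝ → ℝ) (g : ℝ × ℝ → ℝ)
    (t T : ℝ) (x : ℝ × ℝ) : Prop :=
  ∀ y α, (y, α) ∈ Gamma ν S t T x →
    ∀ xs : ℕ → ℝ × ℝ, (∀ n, xs n ∈ S) → Tendsto xs atTop (𝓝 x) →
      ∃ ys as : ℕ → ℝ → ℝ × ℝ,
        (∀ n, (ys n, as n) ∈ Gamma ν S t T (xs n)) ∧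
        TendstoUniformlyOn ys y atTop (Icc t T) ∧
        Tendsto (fun n => (∫ τ in t..T, sq2 (as n τ)) - ∫ τ in t..T, sq2 (α τ))
          atTop (𝓝 0) ∧
        Tendsto (fun n => cost l g t T (ys n) (as n)) atTop (𝓝 (cost l g t T y α))

/-- The point `x` is unreachable: no admissible trajectory with finite cost,
starting from another point of `S`, reaches `x` at time `T`. -/
def Unreachable (ν : ℝ) (S : Set (ℝ × ℝ)) (T : ℝ) (x : ℝ × ℝ) : Prop :=
  ∀ xb ∈ S \ {x}, ¬ ∃ p ∈ Gamma ν S 0 T xb, p.1 T = x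

/-- Reachability property of the dynamics at `x`. -/
def ReachProperty (ν : ℝ) (S : Set (ℝ × ℝ)) (T : ℝ) (x : ℝ × ℝ) : Prop :=
  ∀ xs : ℕ → ℝ × ℝ, (∀ n, xs n ∈ S) → Tendsto xs atTop (𝓝 x) →
    ∃ (δ : ℕ → ℝ) (ys as : ℕ → ℝ → ℝ × ℝ),
      (∀ n, δ n ∈ Icc 0 T) ∧
      (∀ n, Admissible ν S 0 (δ n) (xs n) (ys n) (as n) ∧ InL2 (as n) 0 (δ n) ∧
        ys n (δ n) = x) ∧
      Tendsto (fun n => ∫ τ in (0:ℝ)..(δ n), sq2 (as n τ)) atTop (𝓝 0) ∧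
      Tendsto δ atTop (𝓝 0)

/-- `x₁`-convexity of a subset of the plane. -/
def X1Convex (A : Set (ℝ × ℝ)) : Prop :=
  ∀ a b h : ℝ, (a, b) ∈ A → 0 < h → (a + h, b) ∈ A →
    ∀ t ∈ Icc (0:ℝ) 1, (a + t * h, b) ∈ A

/-- Hypothesis (H1). -/
def HypH1 (S : Set (ℝ × ℝ)) : Prop :=
  ∀ x0 ∈ frontier S, x0.1 ≠ 0 →
    ∃ R > 0, X1Convex (S ∩ Metric.ball x0 R) ∧
      ((S ∩ Metric.ball x0 R ∩ {p | x0.2 < p.2}).Nonempty →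
        ∃ C > 0,
          {p : ℝ × ℝ | p.1 = x0.1 ∧ p.2 ∈ Ioc x0.2 (x0.2 + R)} ⊆ S ∨
          {p : ℝ × ℝ | p.1 ∈ Ioc x0.1 (x0.1 + R) ∧ p.2 = x0.2 + C * (p.1 - x0.1)} ⊆ S ∨
          {p : ℝ × ℝ | p.1 ∈ Ico (x0.1 - R) x0.1 ∧ p.2 = x0.2 + C * (x0.1 - p.1)} ⊆ S) ∧
      ((S ∩ Metric.ball x0 R ∩ {p | p.2 < x0.2}).Nonempty →
        ∃ C > 0,
          {p : ℝ × ℝ | p.1 = x0.1 ∧ p.2 ∈ Ico (x0.2 - R) x0.2} ⊆ S ∨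
          {p : ℝ × ℝ | p.1 ∈ Ioc x0.1 (x0.1 + R) ∧ p.2 = x0.2 - C * (p.1 - x0.1)} ⊆ S ∨
          {p : ℝ × ℝ | p.1 ∈ Ico (x0.1 - R) x0.1 ∧ p.2 = x0.2 - C * (x0.1 - p.1)} ⊆ S)

/-- Hypothesis (H2). -/
def HypH2 (ν : ℝ) (S : Set (ℝ × ℝ)) : Prop :=
  ∀ x0 ∈ frontier S, x0.1 = 0 →
    ∃ R > 0, X1Convex (S ∩ Metric.ball x0 R) ∧
      ((S ∩ Metric.ball x0 R ∩ {p | x0.2 < p.2}).Nonempty →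
        ∃ C > 0,
          {p : ℝ × ℝ | p.1 ∈ Ioc 0 R ∧ p.2 = x0.2 + C * p.1 ^ (ν + 1)} ⊆ S ∨
          {p : ℝ × ℝ | p.1 ∈ Ico (-R) 0 ∧ p.2 = x0.2 + C * (-p.1) ^ (ν + 1)} ⊆ S) ∧
      ((S ∩ Metric.ball x0 R ∩ {p | p.2 < x0.2}).Nonempty →
        ∃ C > 0,
          {p : ℝ × ℝ | p.1 ∈ Ioc 0 R ∧ p.2 = x0.2 - C * p.1 ^ (ν + 1)} ⊆ S ∨
          {p : ℝ × ℝ | p.1 ∈ Ico (-R) 0 ∧ p.2 = x0.2 - C * (-p.1) ^ (ν + 1)} ⊆ S)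

section Aux

local notation "⟪" x ", " y "⟫" => @inner ℝ _ _ x y

lemma exists_weak_limit {H : Type*} [NormedAddCommGroup H] [InnerProductSpace ℝ H]
    [CompleteSpace H] (v : ℕ → H) (M : ℝ)
    (hnorm : Tendsto (fun n => ‖v n‖) atTop (𝓝 M))
    {ι : Type*} (Φ : ι → H) (c : ι → ℝ)
    (hc : ∀ i, Tendsto (fun n => ⟪Φ i, v n⟫) atTop (𝓝 (c i))) :
    ∃ w : H, ‖w‖ ≤ M ∧ ∀ i, ⟪Φ i, w⟫ = c i := by
  classical
  have hM : 0 ≤ M := ge_of_tendsto' hnorm fun n => norm_nonneg _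
  set p : Submodule ℝ H := Submodule.span ℝ (Set.range Φ) with hp
  -- every element of p has a convergent pairing sequence
  have hconv : ∀ φ ∈ p, ∃ r : ℝ, Tendsto (fun n => ⟪φ, v n⟫) atTop (𝓝 r) := by
    intro φ hφ
    refine Submodule.span_induction ?_ ?_ ?_ ?_ hφ
    · rintro _ ⟨i, rfl⟩; exact ⟨c i, hc i⟩
    · exact ⟨0, by simpa using (tendsto_const_nhds : Tendsto (fun _ : ℕ => (0:ℝ)) atTop (𝓝 0))⟩
    · rintro φ ψ _ _ ⟨r, hr⟩ ⟨s, hs⟩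
      exact ⟨r + s, by simpa [inner_add_left] using hr.add hs⟩
    · rintro a φ _ ⟨r, hr⟩
      exact ⟨a * r, by simpa [inner_smul_left] using hr.const_mul a⟩
  have hex : ∀ φ : p, Tendsto (fun n => ⟪(φ : H), v n⟫) atTop
      (𝓝 (limUnder atTop (fun n => ⟪(φ : H), v n⟫))) := by
    intro φ
    obtain ⟨r, hr⟩ := hconv φ φ.2
    rwa [hr.limUnder_eq]
  set f0 : p → ℝ := fun φ => limUnder atTop (fun n => ⟪(φ : H), v n⟫) with hf0
  have hadd : ∀ φ ψ : p, f0 (φ + ψ) = f0 φ + f0 ψ := by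
    intro φ ψ
    have : Tendsto (fun n => ⟪((φ + ψ : p) : H), v n⟫) atTop (𝓝 (f0 φ + f0 ψ)) := by
      simpa [inner_add_left] using (hex φ).add (hex ψ)
    exact this.limUnder_eq
  have hsmul : ∀ (a : ℝ) (φ : p), f0 (a • φ) = a * f0 φ := by
    intro a φ
    have : Tendsto (fun n => ⟪((a • φ : p) : H), v n⟫) atTop (𝓝 (a * f0 φ)) := by
      simpa [inner_smul_left] using (hex φ).const_mul a
    exact this.limUnder_eq
  set f : p →ₗ[ℝ] ℝ :=
    { toFun := f0, map_add' := hadd, map_smul' := hsmul } with hf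
  have hbound : ∀ φ : p, ‖f φ‖ ≤ M * ‖φ‖ := by
    intro φ
    have h1 : Tendsto (fun n => |⟪(φ : H), v n⟫|) atTop (𝓝 |f0 φ|) :=
      (hex φ).abs
    have h2 : Tendsto (fun n => ‖v n‖ * ‖(φ : H)‖) atTop (𝓝 (M * ‖(φ : H)‖)) :=
      hnorm.mul_const _
    have h3 : ∀ n, |⟪(φ : H), v n⟫| ≤ ‖v n‖ * ‖(φ : H)‖ := by
      intro n
      calc |⟪(φ : H), v n⟫| ≤ ‖(φ : H)‖ * ‖v n‖ := abs_real_inner_le_norm _ _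
      _ = ‖v n‖ * ‖(φ : H)‖ := mul_comm _ _
    have := le_of_tendsto_of_tendsto' h1 h2 h3
    exact this
  set fc : p →L[ℝ] ℝ := f.mkContinuous M hbound with hfc
  obtain ⟨g, hg1, hg2⟩ := exists_extension_norm_eq p fc
  have hgnorm : ‖g‖ ≤ M := by
    rw [hg2]; exact f.mkContinuous_norm_le hM hbound
  refine ⟨(InnerProductSpace.toDual ℝ H).symm g, ?_, ?_⟩
  · simpa using hgnorm
  · intro i
    have hmem : Φ i ∈ p := Submodule.subset_span ⟨i, rfl⟩
    have : ⟪(InnerProductSpace.toDual ℝ H).symm g, Φ i⟫ = g (Φ i) :=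
      InnerProductSpace.toDual_symm_apply
    rw [real_inner_comm, this]
    have := hg1 ⟨Φ i, hmem⟩
    rw [this]
    exact ((hc i).limUnder_eq).symm ▸ rfl




lemma inner_Lp_eq {X : Type*} [MeasurableSpace X] {μ : Measure X}
    {f uf : X → ℝ} (hf : MemLp f 2 μ) (u : Lp ℝ 2 μ) (hu : ⇑u =ᵐ[μ] uf) :
    ⟪hf.toLp f, u⟫ = ∫ a, f a * uf a ∂μ := by
  rw [MeasureTheory.L2.inner_def]
  apply integral_congr_ae
  filter_upwards [hf.coeFn_toLp, hu] with a h1 h2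
  rw [h1, h2]
  simp [RCLike.inner_apply, conj_trivial, mul_comm]

lemma normsq_Lp_eq {X : Type*} [MeasurableSpace X] {μ : Measure X}
    {uf : X → ℝ} (u : Lp ℝ 2 μ) (hu : ⇑u =ᵐ[μ] uf) :
    ‖u‖ ^ 2 = ∫ a, uf a ^ 2 ∂μ := by
  rw [← real_inner_self_eq_norm_sq, MeasureTheory.L2.inner_def]
  apply integral_congr_ae
  filter_upwards [hu] with a h1
  rw [h1]
  simp [RCLike.inner_apply, conj_trivial, sq]

lemma comp_unif {E : Type*} [MetricSpace E] {F : ℕ → ℝ → E} {f : ℝ → E} {s : Set ℝ}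
    {K : Set E} (hK : IsCompact K) {h : E → ℝ} (hh : ContinuousOn h K)
    (hF : ∀ n a, a ∈ s → F n a ∈ K) (hf : ∀ a ∈ s, f a ∈ K)
    (hFf : TendstoUniformlyOn F f atTop s) :
    TendstoUniformlyOn (fun n a => h (F n a)) (fun a => h (f a)) atTop s := by
  rw [Metric.tendstoUniformlyOn_iff]
  intro ε hε
  obtain ⟨δ, hδ, hδ'⟩ := Metric.uniformContinuousOn_iff.1
    (hK.uniformContinuousOn_of_continuous hh) ε hε
  filter_upwards [Metric.tendstoUniformlyOn_iff.1 hFf δ hδ] with n hn a ha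
  exact hδ' (f a) (hf a ha) (F n a) (hF n a ha) (hn a ha)

lemma tendsto_intervalIntegral_of_unif {F : ℕ → ℝ → ℝ} {f : ℝ → ℝ} {T : ℝ} (hT : 0 ≤ T)
    (hFi : ∀ n, IntervalIntegrable (F n) volume 0 T)
    (hfi : IntervalIntegrable f volume 0 T)
    (hu : TendstoUniformlyOn F f atTop (Icc 0 T)) :
    Tendsto (fun n => ∫ τ in (0:ℝ)..T, F n τ) atTop (𝓝 (∫ τ in (0:ℝ)..T, f τ)) := by
  rw [Metric.tendsto_atTop]
  intro ε hε
  have hε' : 0 < ε / (T + 1) := by positivity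
  obtain ⟨N, hN⟩ := (eventually_atTop.1 (Metric.tendstoUniformlyOn_iff.1 hu _ hε'))
  refine ⟨N, fun n hn => ?_⟩
  have key : ‖∫ τ in (0:ℝ)..T, (F n τ - f τ)‖ ≤ (ε / (T + 1)) * |T - 0| := by
    apply intervalIntegral.norm_integral_le_of_norm_le_const
    intro τ hτ
    rw [uIoc_of_le hT] at hτ
    have := hN n hn τ (Ioc_subset_Icc_self hτ)
    rw [Real.dist_eq, abs_sub_comm] at this
    exact le_of_lt this
  rw [intervalIntegral.integral_sub (hFi n) hfi] at key
  rw [Real.dist_eq]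
  calc |(∫ τ in (0:ℝ)..T, F n τ) - ∫ τ in (0:ℝ)..T, f τ| ≤ (ε / (T + 1)) * |T - 0| := key
  _ = (ε / (T + 1)) * T := by rw [sub_zero, abs_of_nonneg hT]
  _ < ε := by
      rw [div_mul_eq_mul_div, div_lt_iff₀ (by positivity)]
      nlinarith

lemma abs_rpow_cont {ν : ℝ} (hν : 0 < ν) : Continuous fun t : ℝ => |t| ^ ν := by
  rw [continuous_iff_continuousAt]
  intro t
  exact (Real.continuousAt_rpow_const |t| ν (Or.inr hν.le)).comp continuous_abs.continuousAt

end Aux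

local notation "⟪" x ", " y "⟫" => @inner ℝ _ _ x y

set_option maxHeartbeats 2000000

/-- the approximation property at `x` implies the closed graph property. -/
theorem approx_implies_closed_graph
    (T ν : ℝ) (hT : 0 < T) (hν : 0 < ν)
    (S : Set (ℝ × ℝ)) (hSc : IsCompact S) (hSne : S.Nonempty)
    (l : ℝ × ℝ → ℝ → ℝ) (g : ℝ × ℝ → ℝ)
    (hl : ContinuousOn (fun q : (ℝ × ℝ) × ℝ => l q.1 q.2) (S ×ˢ Icc 0 T))
    (hg : ContinuousOn g S)
    (x : ℝ × ℝ) (hx : x ∈ S)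
    (hap : ApproxProperty ν S l g 0 T x) :
    ClosedGraphAt ν S l g 0 T x := by
  intro xs ys as y hxsS hxsx hopt hyu
  have hT' : (0:ℝ) ≤ T := hT.le
  have hTmem : T ∈ Icc (0:ℝ) T := ⟨hT', le_refl T⟩
  have hadm : ∀ n, Admissible ν S 0 T (xs n) (ys n) (as n) := fun n => (hopt n).1.1
  have hL2 : ∀ n, InL2 (as n) 0 T := fun n => (hopt n).1.2
  have hmin : ∀ n, ∀ q ∈ Gamma ν S 0 T (xs n),
      cost l g 0 T (ys n) (as n) ≤ cost l g 0 T q.1 q.2 := fun n => (hopt n).2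
  have hmeasA : ∀ n, Measurable (as n) := fun n => (hadm n).1
  have hint1 : ∀ n, IntervalIntegrable (fun τ => (as n τ).1) volume 0 T :=
    fun n => (hadm n).2.1
  have hint2 : ∀ n, IntervalIntegrable (fun τ => |(ys n τ).1| ^ ν * (as n τ).2) volume 0 T :=
    fun n => (hadm n).2.2.1
  have heq1 : ∀ n, ∀ s ∈ Icc 0 T, (ys n s).1 = (xs n).1 + ∫ τ in (0:ℝ)..s, (as n τ).1 :=
    fun n => (hadm n).2.2.2.1
  have heq2 : ∀ n, ∀ s ∈ Icc 0 T,
      (ys n s).2 = (xs n).2 + ∫ τ in (0:ℝ)..s, |(ys n τ).1| ^ ν * (as n τ).2 :=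
    fun n => (hadm n).2.2.2.2.1
  have hmemS : ∀ n, ∀ s ∈ Icc 0 T, ys n s ∈ S := fun n => (hadm n).2.2.2.2.2
  -- continuity of trajectories
  have hprim : ∀ (f : ℝ → ℝ), IntervalIntegrable f volume 0 T →
      ContinuousOn (fun s => ∫ τ in (0:ℝ)..s, f τ) (Icc 0 T) := by
    intro f hf
    have := intervalIntegral.continuousOn_primitive_interval'
      (μ := volume) (b₁ := (0:ℝ)) (b₂ := T) hf (by rw [uIcc_of_le hT']; exact left_mem_Icc.2 hT')
    rwa [uIcc_of_le hT'] at this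
  have hcont : ∀ n, ContinuousOn (ys n) (Icc 0 T) := by
    intro n
    have h1 : ContinuousOn (fun s => (xs n).1 + ∫ τ in (0:ℝ)..s, (as n τ).1) (Icc 0 T) :=
      continuousOn_const.add (hprim _ (hint1 n))
    have h2 : ContinuousOn
        (fun s => (xs n).2 + ∫ τ in (0:ℝ)..s, |(ys n τ).1| ^ ν * (as n τ).2) (Icc 0 T) :=
      continuousOn_const.add (hprim _ (hint2 n))
    exact (h1.prodMk h2).congr fun s hs => Prod.ext (heq1 n s hs) (heq2 n s hs)
  have hycont : ContinuousOn y (Icc 0 T) :=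
    hyu.continuousOn (Eventually.of_forall hcont).frequently
  have hyS : ∀ s ∈ Icc 0 T, y s ∈ S := fun s hs =>
    hSc.isClosed.mem_of_tendsto (hyu.tendsto_at hs)
      (Eventually.of_forall fun n => hmemS n s hs)
  -- bounds
  obtain ⟨R, hR⟩ := isBounded_iff_forall_norm_le.1 hSc.isBounded
  have hR0 : 0 ≤ R := le_trans (norm_nonneg _) (hR x hx)
  obtain ⟨Cl, hCl⟩ := (hSc.prod isCompact_Icc).exists_bound_of_continuousOn hl
  obtain ⟨Cg, hCg⟩ := hSc.exists_bound_of_continuousOn hg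
  have hCl0 : 0 ≤ Cl := le_trans (norm_nonneg _) (hCl (x, 0) ⟨hx, left_mem_Icc.2 hT'⟩)
  have hCg0 : 0 ≤ Cg := le_trans (norm_nonneg _) (hCg x hx)
  -- integrability of l along curves
  have hlycont : ∀ z : ℝ → ℝ × ℝ, ContinuousOn z (Icc 0 T) → (∀ s ∈ Icc 0 T, z s ∈ S) →
      ContinuousOn (fun τ => l (z τ) τ) (Icc 0 T) := by
    intro z hz hzS
    exact hl.comp (hz.prodMk continuousOn_id) fun τ hτ => ⟨hzS τ hτ, hτ⟩
  have hConti : ∀ f : ℝ → ℝ, ContinuousOn f (Icc 0 T) → IntervalIntegrable f volume 0 T := by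
    intro f hf
    apply ContinuousOn.intervalIntegrable
    rwa [uIcc_of_le hT']
  have hIl_int : ∀ n, IntervalIntegrable (fun τ => l (ys n τ) τ) volume 0 T :=
    fun n => hConti _ (hlycont _ (hcont n) (hmemS n))
  have hIly_int : IntervalIntegrable (fun τ => l (y τ) τ) volume 0 T :=
    hConti _ (hlycont _ hycont hyS)
  -- cost decomposition
  have hcostd : ∀ (Y A : ℝ → ℝ × ℝ), IntervalIntegrable (fun τ => sq2 (A τ)) volume 0 T →
      IntervalIntegrable (fun τ => l (Y τ) τ) volume 0 T →
      cost l g 0 T Y A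
        = (∫ τ in (0:ℝ)..T, sq2 (A τ)) / 2 + (∫ τ in (0:ℝ)..T, l (Y τ) τ) + g (Y T) := by
    intro Y A h1 h2
    show (∫ τ in (0:ℝ)..T, (sq2 (A τ) / 2 + l (Y τ) τ)) + g (Y T) = _
    rw [intervalIntegral.integral_add (h1.div_const 2) h2, intervalIntegral.integral_div]
  have hcostn : ∀ n, cost l g 0 T (ys n) (as n)
      = (∫ τ in (0:ℝ)..T, sq2 (as n τ)) / 2 + (∫ τ in (0:ℝ)..T, l (ys n τ) τ) + g (ys n T) :=
    fun n => hcostd _ _ (hL2 n) (hIl_int n)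
  -- uniform L² bound
  set B : ℝ := 2 * (2 * T * Cl + 2 * Cg) with hBdef
  have habsl : ∀ n, |∫ τ in (0:ℝ)..T, l (ys n τ) τ| ≤ Cl * T := by
    intro n
    have := intervalIntegral.norm_integral_le_of_norm_le_const (C := Cl)
      (f := fun τ => l (ys n τ) τ) (a := 0) (b := T) ?_
    · rwa [sub_zero, abs_of_nonneg hT'] at this
    · intro τ hτ
      rw [uIoc_of_le hT'] at hτ
      exact hCl (ys n τ, τ) ⟨hmemS n τ (Ioc_subset_Icc_self hτ), Ioc_subset_Icc_self hτ⟩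
  have habslx : ∀ n, |∫ τ in (0:ℝ)..T, l (xs n) τ| ≤ Cl * T := by
    intro n
    have := intervalIntegral.norm_integral_le_of_norm_le_const (C := Cl)
      (f := fun τ => l (xs n) τ) (a := 0) (b := T) ?_
    · rwa [sub_zero, abs_of_nonneg hT'] at this
    · intro τ hτ
      rw [uIoc_of_le hT'] at hτ
      exact hCl (xs n, τ) ⟨hxsS n, Ioc_subset_Icc_self hτ⟩
  have hBn : ∀ n, ∫ τ in (0:ℝ)..T, sq2 (as n τ) ≤ B := by
    intro n
    have hq : ((fun _ => xs n, fun _ => ((0:ℝ), (0:ℝ))) :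
        (ℝ → ℝ × ℝ) × (ℝ → ℝ × ℝ)) ∈ Gamma ν S 0 T (xs n) := by
      constructor
      · refine ⟨measurable_const, ?_, ?_, ?_, ?_, ?_⟩
        · simpa using intervalIntegrable_const (μ := volume) (a := 0) (b := T) (c := (0:ℝ))
        · simpa using intervalIntegrable_const (μ := volume) (a := 0) (b := T) (c := (0:ℝ))
        · intro s _; simp
        · intro s _; simp
        · intro s _; exact hxsS n
      · show IntervalIntegrable _ volume 0 T
        simpa [sq2] using intervalIntegrable_const (μ := volume) (a := 0) (b := T) (c := (0:ℝ))
    have h := hmin n _ hq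
    have hcq : cost l g 0 T (fun _ => xs n) (fun _ => ((0:ℝ), (0:ℝ)))
        = (∫ τ in (0:ℝ)..T, l (xs n) τ) + g (xs n) := by
      have := hcostd (fun _ => xs n) (fun _ => ((0:ℝ), (0:ℝ)))
        (by simpa [sq2] using intervalIntegrable_const (μ := volume) (a := 0) (b := T) (c := (0:ℝ)))
        (hConti _ (hlycont _ continuousOn_const fun s _ => hxsS n))
      simpa [sq2] using this
    rw [hcostn n, hcq] at h
    have h1 := abs_le.1 (habsl n)
    have h2 := abs_le.1 (habslx n)
    have h3 := abs_le.1 ((hCg _ (hmemS n T hTmem)).trans_eq (rfl))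
    have h4 := abs_le.1 (hCg _ (hxsS n))
    rw [hBdef]
    have : ‖g (ys n T)‖ = |g (ys n T)| := rfl
    linarith [abs_le.1 (hCg _ (hmemS n T hTmem)), abs_le.1 (hCg _ (hxsS n))]
  have hsq2nn : ∀ (v : ℝ × ℝ), 0 ≤ sq2 v := fun v => by
    simp only [sq2]; positivity
  have hB0 : 0 ≤ B :=
    le_trans (intervalIntegral.integral_nonneg hT' fun τ _ => hsq2nn _) (hBn 0)
  -- the restricted measure and Lp elements
  set μ : Measure ℝ := volume.restrict (Ioc 0 T) with hμdef
  haveI hfin : IsFiniteMeasure μ := by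
    constructor
    rw [hμdef, Measure.restrict_apply_univ, Real.volume_Ioc]
    exact ENNReal.ofReal_lt_top
  have hI2μ : ∀ f : ℝ → ℝ, (∫ τ in (0:ℝ)..T, f τ) = ∫ τ, f τ ∂μ := by
    intro f
    rw [intervalIntegral.integral_of_le hT']
  have hsqμ : ∀ n, Integrable (fun τ => sq2 (as n τ)) μ := fun n => (hL2 n).1
  have hmeas1 : ∀ n, Measurable fun τ => (as n τ).1 := fun n => measurable_fst.comp (hmeasA n)
  have hmeas2 : ∀ n, Measurable fun τ => (as n τ).2 := fun n => measurable_snd.comp (hmeasA n)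
  have hmem1 : ∀ n, MemLp (fun τ => (as n τ).1) 2 μ := by
    intro n
    refine (memLp_two_iff_integrable_sq (hmeas1 n).aestronglyMeasurable).2 ?_
    refine (hsqμ n).mono' (((hmeas1 n).pow_const 2).aestronglyMeasurable) ?_
    refine Eventually.of_forall fun τ => ?_
    rw [Real.norm_eq_abs, abs_of_nonneg (sq_nonneg _)]
    simp only [sq2]
    nlinarith [sq_nonneg (as n τ).2]
  have hmem2 : ∀ n, MemLp (fun τ => (as n τ).2) 2 μ := by
    intro n
    refine (memLp_two_iff_integrable_sq (hmeas2 n).aestronglyMeasurable).2 ?_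
    refine (hsqμ n).mono' (((hmeas2 n).pow_const 2).aestronglyMeasurable) ?_
    refine Eventually.of_forall fun τ => ?_
    rw [Real.norm_eq_abs, abs_of_nonneg (sq_nonneg _)]
    simp only [sq2]
    nlinarith [sq_nonneg (as n τ).1]
  set v1 : ℕ → Lp ℝ 2 μ := fun n => (hmem1 n).toLp _ with hv1def
  set v2 : ℕ → Lp ℝ 2 μ := fun n => (hmem2 n).toLp _ with hv2def
  have hnormv1 : ∀ n, ‖v1 n‖ ^ 2 = ∫ τ, ((as n τ).1) ^ 2 ∂μ :=
    fun n => normsq_Lp_eq (v1 n) (hmem1 n).coeFn_toLp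
  have hnormv2 : ∀ n, ‖v2 n‖ ^ 2 = ∫ τ, ((as n τ).2) ^ 2 ∂μ :=
    fun n => normsq_Lp_eq (v2 n) (hmem2 n).coeFn_toLp
  have hint_sq1 : ∀ n, Integrable (fun τ => ((as n τ).1) ^ 2) μ := fun n => (hmem1 n).integrable_sq
  have hint_sq2 : ∀ n, Integrable (fun τ => ((as n τ).2) ^ 2) μ := fun n => (hmem2 n).integrable_sq
  have hsq_split : ∀ n, (fun τ => sq2 (as n τ)) = fun τ => ((as n τ).1) ^ 2 + ((as n τ).2) ^ 2 :=
    fun n => rfl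
  have hsum_norm : ∀ n, (∫ τ in (0:ℝ)..T, sq2 (as n τ)) = ‖v1 n‖ ^ 2 + ‖v2 n‖ ^ 2 := by
    intro n
    rw [hI2μ, hnormv1, hnormv2, ← integral_add (hint_sq1 n) (hint_sq2 n)]
    rfl
  -- subsequence along which the L² norms converge
  have hbd1 : ∀ n, ‖v1 n‖ ∈ Icc (0:ℝ) (Real.sqrt B) := by
    intro n
    refine ⟨norm_nonneg _, (Real.le_sqrt (norm_nonneg _) hB0).2 ?_⟩
    rw [hnormv1]
    calc (∫ τ, ((as n τ).1) ^ 2 ∂μ) ≤ ∫ τ, sq2 (as n τ) ∂μ := by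
          refine integral_mono (hint_sq1 n) (hsqμ n) fun τ => ?_
          simp only [sq2]
          nlinarith [sq_nonneg (as n τ).2]
    _ = ∫ τ in (0:ℝ)..T, sq2 (as n τ) := (hI2μ _).symm
    _ ≤ B := hBn n
  have hbd2 : ∀ n, ‖v2 n‖ ∈ Icc (0:ℝ) (Real.sqrt B) := by
    intro n
    refine ⟨norm_nonneg _, (Real.le_sqrt (norm_nonneg _) hB0).2 ?_⟩
    rw [hnormv2]
    calc (∫ τ, ((as n τ).2) ^ 2 ∂μ) ≤ ∫ τ, sq2 (as n τ) ∂μ := by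
          refine integral_mono (hint_sq2 n) (hsqμ n) fun τ => ?_
          simp only [sq2]
          nlinarith [sq_nonneg (as n τ).1]
    _ = ∫ τ in (0:ℝ)..T, sq2 (as n τ) := (hI2μ _).symm
    _ ≤ B := hBn n
  obtain ⟨a1, -, φ₁, hφ₁, hta1⟩ := tendsto_subseq_of_bounded
    (Metric.isBounded_Icc (0:ℝ) (Real.sqrt B)) hbd1
  obtain ⟨a2, -, φ₂, hφ₂, hta2⟩ := tendsto_subseq_of_bounded
    (Metric.isBounded_Icc (0:ℝ) (Real.sqrt B)) (fun k => hbd2 (φ₁ k))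
  set φ : ℕ → ℕ := φ₁ ∘ φ₂ with hφdef
  have hφ : StrictMono φ := hφ₁.comp hφ₂
  have hφt : Tendsto φ atTop atTop := hφ.tendsto_atTop
  have hta1' : Tendsto (fun k => ‖v1 (φ k)‖) atTop (𝓝 a1) := hta1.comp hφ₂.tendsto_atTop
  have hta2' : Tendsto (fun k => ‖v2 (φ k)‖) atTop (𝓝 a2) := hta2
  have ha1 : 0 ≤ a1 := ge_of_tendsto hta1' (Eventually.of_forall fun k => norm_nonneg _)
  have ha2 : 0 ≤ a2 := ge_of_tendsto hta2' (Eventually.of_forall fun k => norm_nonneg _)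
  -- inner products with indicator-type test functions
  have hres : ∀ s : ℝ, s ≤ T → μ.restrict (Ioc 0 s) = volume.restrict (Ioc 0 s) := by
    intro s hs
    rw [hμdef, Measure.restrict_restrict measurableSet_Ioc, Ioc_inter_Ioc, max_self,
      min_eq_left hs]
  have hinner : ∀ (s : ℝ), s ≤ T → ∀ (wf : ℝ → ℝ) (hwf : MemLp ((Ioc 0 s).indicator wf) 2 μ)
      (u : Lp ℝ 2 μ) (uf : ℝ → ℝ), ⇑u =ᵐ[μ] uf →
      ⟪hwf.toLp _, u⟫ = ∫ τ in Ioc 0 s, wf τ * uf τ := by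
    intro s hs wf hwf u uf hu
    rw [inner_Lp_eq hwf u hu]
    have hptw : ∀ a, (Ioc 0 s).indicator wf a * uf a
        = (Ioc 0 s).indicator (fun τ => wf τ * uf τ) a := by
      intro a; by_cases h : a ∈ Ioc 0 s <;> simp [h]
    rw [integral_congr_ae (Eventually.of_forall hptw),
      integral_indicator measurableSet_Ioc, hres s hs]
  have hmemInd1 : ∀ s : ℝ, MemLp ((Ioc (0:ℝ) s).indicator fun _ => (1:ℝ)) 2 μ :=
    fun s => memLp_indicator_const 2 measurableSet_Ioc 1 (Or.inr (measure_ne_top μ _))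
  -- the weight function
  set w : ℝ → ℝ := fun τ => |(y τ).1| ^ ν with hwdef
  have hwcont : ContinuousOn w (Icc 0 T) :=
    (abs_rpow_cont hν).comp_continuousOn (continuous_fst.comp_continuousOn hycont)
  have hwb : ∀ p : ℝ × ℝ, p ∈ S → |p.1| ^ ν ≤ R ^ ν := fun p hp =>
    Real.rpow_le_rpow (abs_nonneg _)
      (by rw [← Real.norm_eq_abs]; exact (norm_fst_le p).trans (hR p hp)) hν.le
  have hRν0 : 0 ≤ R ^ ν := Real.rpow_nonneg hR0 ν
  have hwaesm : AEStronglyMeasurable w μ := by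
    have := ContinuousOn.aestronglyMeasurable (μ := volume)
      (hwcont.mono Ioc_subset_Icc_self) (measurableSet_Ioc : MeasurableSet (Ioc (0:ℝ) T))
    rwa [← hμdef] at this
  have hmemInd2 : ∀ s : ℝ, MemLp ((Ioc (0:ℝ) s).indicator w) 2 μ := by
    intro s
    refine MemLp.of_bound (hwaesm.indicator measurableSet_Ioc) (R ^ ν) ?_
    rw [hμdef]
    refine (ae_restrict_iff' measurableSet_Ioc).2 (Eventually.of_forall fun τ hτ => ?_)
    by_cases h : τ ∈ Ioc 0 s
    · rw [Set.indicator_of_mem h, Real.norm_eq_abs,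
        abs_of_nonneg (Real.rpow_nonneg (abs_nonneg _) ν)]
      exact hwb (y τ) (hyS τ (Ioc_subset_Icc_self hτ))
    · rw [Set.indicator_of_notMem h]; simpa using hRν0
  -- uniform convergence of the weights
  have hy1unif : TendstoUniformlyOn (fun n τ => (ys n τ).1) (fun τ => (y τ).1) atTop
      (Icc 0 T) := by
    rw [Metric.tendstoUniformlyOn_iff]
    intro ε hε
    filter_upwards [Metric.tendstoUniformlyOn_iff.1 hyu ε hε] with n hn τ hτ
    have hd : dist (y τ).1 (ys n τ).1 ≤ dist (y τ) (ys n τ) := by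
      rw [Prod.dist_eq]; exact le_max_left _ _
    exact lt_of_le_of_lt hd (hn τ hτ)
  have habsmem : ∀ (p : ℝ × ℝ), p ∈ S → p.1 ∈ Icc (-R) R := by
    intro p hp
    have : |p.1| ≤ R := by rw [← Real.norm_eq_abs]; exact (norm_fst_le p).trans (hR p hp)
    exact ⟨neg_le_of_abs_le this, le_of_abs_le this⟩
  have hwunif : TendstoUniformlyOn (fun n τ => |(ys n τ).1| ^ ν) w atTop (Icc 0 T) := by
    refine comp_unif (isCompact_Icc : IsCompact (Icc (-R) R)) (abs_rpow_cont hν).continuousOn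
      (fun n a ha => habsmem _ (hmemS n a ha)) (fun a ha => habsmem _ (hyS a ha)) hy1unif
  -- convergence of pairings, first component
  have hΦ1 : ∀ (s : Icc (0:ℝ) T) (n : ℕ),
      ⟪(hmemInd1 (s:ℝ)).toLp _, v1 n⟫ = (ys n (s:ℝ)).1 - (xs n).1 := by
    intro s n
    rw [hinner (s:ℝ) s.2.2 _ _ (v1 n) _ (hmem1 n).coeFn_toLp]
    have h1 : ∫ τ in Ioc 0 (s:ℝ), (1:ℝ) * (as n τ).1 = ∫ τ in Ioc 0 (s:ℝ), (as n τ).1 := by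
      simp
    rw [h1, ← intervalIntegral.integral_of_le s.2.1, heq1 n s s.2]
    ring
  have hc1 : ∀ s : Icc (0:ℝ) T,
      Tendsto (fun k => ⟪(hmemInd1 (s:ℝ)).toLp _, v1 (φ k)⟫) atTop
        (𝓝 ((y (s:ℝ)).1 - x.1)) := by
    intro s
    have h1 : Tendsto (fun n => (ys n (s:ℝ)).1 - (xs n).1) atTop (𝓝 ((y (s:ℝ)).1 - x.1)) :=
      ((continuous_fst.tendsto _).comp (hyu.tendsto_at s.2)).sub
        ((continuous_fst.tendsto _).comp hxsx)
    exact (h1.comp hφt).congr fun k => (hΦ1 s (φ k)).symm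
  -- integrability facts for the second component
  have hA2int : ∀ n, Integrable (fun τ => (as n τ).2) μ := fun n =>
    memLp_one_iff_integrable.1 ((hmem2 n).mono_exponent one_le_two)
  have habs2bd : ∀ n, ∫ τ, |(as n τ).2| ∂μ ≤ (T + B) / 2 := by
    intro n
    have hmono : ∫ τ, |(as n τ).2| ∂μ ≤ ∫ τ, (1 + sq2 (as n τ)) / 2 ∂μ := by
      refine integral_mono (hA2int n).abs (((integrable_const 1).add (hsqμ n)).div_const 2)
        fun τ => ?_
      have h2 : ((as n τ).2) ^ 2 ≤ sq2 (as n τ) := by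
        simp only [sq2]; nlinarith [sq_nonneg (as n τ).1]
      nlinarith [sq_nonneg (|(as n τ).2| - 1), sq_abs ((as n τ).2)]
    have hT2 : ∫ τ, (1 + sq2 (as n τ)) / 2 ∂μ = ((∫ τ, (1:ℝ) ∂μ) + ∫ τ, sq2 (as n τ) ∂μ) / 2 := by
      rw [integral_div, integral_add (integrable_const 1) (hsqμ n)]
    have hone : ∫ τ, (1:ℝ) ∂μ = T := by
      rw [integral_const, smul_eq_mul, mul_one, hμdef, measureReal_def, Measure.restrict_apply_univ,
        Real.volume_Ioc, sub_zero, ENNReal.toReal_ofReal hT']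
    have hsq : ∫ τ, sq2 (as n τ) ∂μ ≤ B := by rw [← hI2μ]; exact hBn n
    rw [hT2, hone] at hmono
    linarith
  -- convergence of pairings, second component
  have hA2on : ∀ n, IntegrableOn (fun τ => (as n τ).2) (Ioc 0 T) volume := fun n => hA2int n
  have hc2full : ∀ s : Icc (0:ℝ) T,
      Tendsto (fun n => ∫ τ in Ioc 0 (s:ℝ), w τ * (as n τ).2) atTop
        (𝓝 ((y (s:ℝ)).2 - x.2)) := by
    intro s
    have hsub : Ioc (0:ℝ) (s:ℝ) ⊆ Ioc 0 T := Ioc_subset_Ioc_right s.2.2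
    have hwa2 : ∀ n, IntegrableOn (fun τ => w τ * (as n τ).2) (Ioc 0 (s:ℝ)) volume := by
      intro n
      refine Integrable.bdd_mul (c := R ^ ν) ((hA2on n).mono_set hsub)
        (ContinuousOn.aestronglyMeasurable (μ := volume)
          (hwcont.mono (hsub.trans Ioc_subset_Icc_self)) measurableSet_Ioc) ?_
      refine (ae_restrict_iff' measurableSet_Ioc).2 (Eventually.of_forall fun τ hτ => ?_)
      rw [Real.norm_eq_abs, abs_of_nonneg (Real.rpow_nonneg (abs_nonneg _) ν)]
      exact hwb (y τ) (hyS τ (Ioc_subset_Icc_self (hsub hτ)))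
    have hwna2 : ∀ n, IntegrableOn (fun τ => |(ys n τ).1| ^ ν * (as n τ).2)
        (Ioc 0 (s:ℝ)) volume := fun n => ((hint2 n).1).mono_set hsub
    have hdiff : Tendsto (fun n => (∫ τ in Ioc 0 (s:ℝ), w τ * (as n τ).2)
        - ∫ τ in Ioc 0 (s:ℝ), |(ys n τ).1| ^ ν * (as n τ).2) atTop (𝓝 0) := by
      rw [Metric.tendsto_atTop]
      intro ε hε
      have hC1 : (0:ℝ) < (T + B) / 2 + 1 := by linarith
      have hε'pos : 0 < ε / ((T + B) / 2 + 1) := by positivity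
      obtain ⟨N, hN⟩ := eventually_atTop.1 (Metric.tendstoUniformlyOn_iff.1 hwunif _ hε'pos)
      refine ⟨N, fun n hn => ?_⟩
      rw [Real.dist_eq, sub_zero, ← Real.norm_eq_abs, ← integral_sub (hwa2 n) (hwna2 n)]
      have habs2' : Integrable (fun τ => ε / ((T + B) / 2 + 1) * |(as n τ).2|)
          (volume.restrict (Ioc 0 (s:ℝ))) := ((IntegrableOn.mono_set ((hA2on n).abs) hsub)).const_mul _
      calc ‖∫ τ in Ioc 0 (s:ℝ), (w τ * (as n τ).2 - |(ys n τ).1| ^ ν * (as n τ).2)‖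
          ≤ ∫ τ in Ioc 0 (s:ℝ), ε / ((T + B) / 2 + 1) * |(as n τ).2| := by
            refine norm_integral_le_of_norm_le habs2' ?_
            refine (ae_restrict_iff' measurableSet_Ioc).2 (Eventually.of_forall fun τ hτ => ?_)
            have hdist := hN n hn τ (Ioc_subset_Icc_self (hsub hτ))
            rw [Real.dist_eq] at hdist
            rw [Real.norm_eq_abs, ← sub_mul, abs_mul]
            exact mul_le_mul_of_nonneg_right hdist.le (abs_nonneg _)
      _ = ε / ((T + B) / 2 + 1) * ∫ τ in Ioc 0 (s:ℝ), |(as n τ).2| := integral_const_mul _ _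
      _ ≤ ε / ((T + B) / 2 + 1) * ∫ τ in Ioc 0 T, |(as n τ).2| := by
            refine mul_le_mul_of_nonneg_left ?_ hε'pos.le
            refine setIntegral_mono_set (hA2int n).abs
              (Eventually.of_forall fun τ => abs_nonneg _)
              (HasSubset.Subset.eventuallyLE hsub)
      _ ≤ ε / ((T + B) / 2 + 1) * ((T + B) / 2) :=
            mul_le_mul_of_nonneg_left (habs2bd n) hε'pos.le
      _ < ε := by
            rw [div_mul_eq_mul_div, div_lt_iff₀ hC1]
            nlinarith
    have hins : ∀ n, ∫ τ in Ioc 0 (s:ℝ), |(ys n τ).1| ^ ν * (as n τ).2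
        = (ys n (s:ℝ)).2 - (xs n).2 := by
      intro n
      rw [← intervalIntegral.integral_of_le s.2.1, heq2 n s s.2]
      ring
    have h2nd : Tendsto (fun n => (ys n (s:ℝ)).2 - (xs n).2) atTop
        (𝓝 ((y (s:ℝ)).2 - x.2)) :=
      ((continuous_snd.tendsto _).comp (hyu.tendsto_at s.2)).sub
        ((continuous_snd.tendsto _).comp hxsx)
    have := hdiff.add h2nd
    rw [zero_add] at this
    refine this.congr fun n => ?_
    rw [hins n]
    ring
  have hc2 : ∀ s : Icc (0:ℝ) T,
      Tendsto (fun k => ⟪(hmemInd2 (s:ℝ)).toLp _, v2 (φ k)⟫) atTop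
        (𝓝 ((y (s:ℝ)).2 - x.2)) := by
    intro s
    refine ((hc2full s).comp hφt).congr fun k => ?_
    exact (hinner (s:ℝ) s.2.2 w (hmemInd2 (s:ℝ)) (v2 (φ k)) _ (hmem2 (φ k)).coeFn_toLp).symm
  -- weak limits
  obtain ⟨w1, hw1norm, hw1⟩ := exists_weak_limit (fun k => v1 (φ k)) a1 hta1'
    (fun s : Icc (0:ℝ) T => (hmemInd1 (s:ℝ)).toLp _) (fun s => (y (s:ℝ)).1 - x.1) hc1
  obtain ⟨w2, hw2norm, hw2⟩ := exists_weak_limit (fun k => v2 (φ k)) a2 hta2'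
    (fun s : Icc (0:ℝ) T => (hmemInd2 (s:ℝ)).toLp _) (fun s => (y (s:ℝ)).2 - x.2) hc2
  -- measurable representatives
  set m1 : ℝ → ℝ := (Lp.aestronglyMeasurable w1).mk _ with hm1def
  set m2 : ℝ → ℝ := (Lp.aestronglyMeasurable w2).mk _ with hm2def
  have hm1meas : Measurable m1 := (Lp.aestronglyMeasurable w1).stronglyMeasurable_mk.measurable
  have hm2meas : Measurable m2 := (Lp.aestronglyMeasurable w2).stronglyMeasurable_mk.measurable
  have hm1ae : ⇑w1 =ᵐ[μ] m1 := (Lp.aestronglyMeasurable w1).ae_eq_mk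
  have hm2ae : ⇑w2 =ᵐ[μ] m2 := (Lp.aestronglyMeasurable w2).ae_eq_mk
  have hm1mem : MemLp m1 2 μ := (Lp.memLp w1).ae_eq hm1ae
  have hm2mem : MemLp m2 2 μ := (Lp.memLp w2).ae_eq hm2ae
  set α : ℝ → ℝ × ℝ := fun τ => (m1 τ, m2 τ) with hαdef
  -- key integral identities for the limit control
  have hkey1 : ∀ s ∈ Icc (0:ℝ) T, (y s).1 = x.1 + ∫ τ in (0:ℝ)..s, m1 τ := by
    intro s hs
    have h := hw1 ⟨s, hs⟩
    rw [hinner s hs.2 _ _ w1 m1 hm1ae] at h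
    have h1 : ∫ τ in Ioc 0 s, (1:ℝ) * m1 τ = ∫ τ in Ioc 0 s, m1 τ := by simp
    rw [h1, ← intervalIntegral.integral_of_le hs.1] at h
    linarith
  have hkey2 : ∀ s ∈ Icc (0:ℝ) T, (y s).2 = x.2 + ∫ τ in (0:ℝ)..s, w τ * m2 τ := by
    intro s hs
    have h := hw2 ⟨s, hs⟩
    rw [hinner s hs.2 _ _ w2 m2 hm2ae] at h
    rw [← intervalIntegral.integral_of_le hs.1] at h
    linarith
  -- integrability of the limit control
  have hm1int : Integrable m1 μ := memLp_one_iff_integrable.1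
    (hm1mem.mono_exponent one_le_two)
  have hm2int : Integrable m2 μ := memLp_one_iff_integrable.1
    (hm2mem.mono_exponent one_le_two)
  have hIoc2II : ∀ f : ℝ → ℝ, IntegrableOn f (Ioc 0 T) volume →
      IntervalIntegrable f volume 0 T := by
    intro f hf
    rw [intervalIntegrable_iff, uIoc_of_le hT']
    exact hf
  have hm1ii : IntervalIntegrable m1 volume 0 T := hIoc2II _ hm1int
  have hwm2on : Integrable (fun τ => w τ * m2 τ) μ := by
    refine Integrable.bdd_mul (c := R ^ ν) hm2int hwaesm ?_
    rw [hμdef]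
    refine (ae_restrict_iff' measurableSet_Ioc).2 (Eventually.of_forall fun τ hτ => ?_)
    rw [Real.norm_eq_abs, hwdef, abs_of_nonneg (Real.rpow_nonneg (abs_nonneg _) ν)]
    exact hwb (y τ) (hyS τ (Ioc_subset_Icc_self hτ))
  have hwm2ii : IntervalIntegrable (fun τ => w τ * m2 τ) volume 0 T := hIoc2II _ hwm2on
  have hsqα_eq : (fun τ => sq2 (α τ)) = fun τ => m1 τ ^ 2 + m2 τ ^ 2 := rfl
  have hsqαint : Integrable (fun τ => sq2 (α τ)) μ := by
    rw [hsqα_eq]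
    exact hm1mem.integrable_sq.add hm2mem.integrable_sq
  have hsqαii : IntervalIntegrable (fun τ => sq2 (α τ)) volume 0 T := hIoc2II _ hsqαint
  -- admissibility of the limit pair
  have hGamma : ((y, α) : (ℝ → ℝ × ℝ) × (ℝ → ℝ × ℝ)) ∈ Gamma ν S 0 T x := by
    refine ⟨⟨hm1meas.prodMk hm2meas, hm1ii, ?_, ?_, ?_, hyS⟩, hsqαii⟩
    · show IntervalIntegrable (fun τ => |(y τ).1| ^ ν * m2 τ) volume 0 T
      rw [hwdef] at hwm2ii
      exact hwm2ii
    · exact fun s hs => hkey1 s hs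
    · intro s hs
      have := hkey2 s hs
      rw [hwdef] at this
      exact this
  -- cost of the limit pair is at most the limit of the costs
  have hsqα_le : ∫ τ in (0:ℝ)..T, sq2 (α τ) ≤ a1 ^ 2 + a2 ^ 2 := by
    have e1 : ‖w1‖ ^ 2 = ∫ τ, m1 τ ^ 2 ∂μ := normsq_Lp_eq w1 hm1ae
    have e2 : ‖w2‖ ^ 2 = ∫ τ, m2 τ ^ 2 ∂μ := normsq_Lp_eq w2 hm2ae
    have e : ∫ τ in (0:ℝ)..T, sq2 (α τ) = ‖w1‖ ^ 2 + ‖w2‖ ^ 2 := by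
      rw [hI2μ]
      conv_lhs => rw [hsqα_eq]
      rw [integral_add hm1mem.integrable_sq hm2mem.integrable_sq, e1, e2]
    rw [e]
    exact add_le_add (pow_le_pow_left₀ (norm_nonneg w1) hw1norm 2)
      (pow_le_pow_left₀ (norm_nonneg w2) hw2norm 2)
  have hIln : Tendsto (fun n => ∫ τ in (0:ℝ)..T, l (ys n τ) τ) atTop
      (𝓝 (∫ τ in (0:ℝ)..T, l (y τ) τ)) := by
    refine tendsto_intervalIntegral_of_unif hT' hIl_int hIly_int ?_
    refine comp_unif (F := fun n τ => (ys n τ, τ)) (f := fun τ => (y τ, τ))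
      (h := fun q => l q.1 q.2) (hSc.prod isCompact_Icc) hl
      (fun n a ha => ⟨hmemS n a ha, ha⟩) (fun a ha => ⟨hyS a ha, ha⟩) ?_
    rw [Metric.tendstoUniformlyOn_iff]
    intro ε hε
    filter_upwards [Metric.tendstoUniformlyOn_iff.1 hyu ε hε] with n hn τ hτ
    have hd : dist ((y τ, τ) : (ℝ × ℝ) × ℝ) ((ys n τ, τ)) = dist (y τ) (ys n τ) := by
      rw [Prod.dist_eq, dist_self]
      exact max_eq_left dist_nonneg
    calc dist ((y τ, τ) : (ℝ × ℝ) × ℝ) ((ys n τ, τ)) = dist (y τ) (ys n τ) := hd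
    _ < ε := hn τ hτ
  have hgTn : Tendsto (fun n => g (ys n T)) atTop (𝓝 (g (y T))) := by
    have h1 : Tendsto (fun n => ys n T) atTop (𝓝[S] (y T)) :=
      tendsto_nhdsWithin_of_tendsto_nhds_of_eventually_within _ (hyu.tendsto_at hTmem)
        (Eventually.of_forall fun n => hmemS n T hTmem)
    exact (hg (y T) (hyS T hTmem)).tendsto.comp h1
  have hsqn : Tendsto (fun k => ∫ τ in (0:ℝ)..T, sq2 (as (φ k) τ)) atTop
      (𝓝 (a1 ^ 2 + a2 ^ 2)) := by
    have h1 : Tendsto (fun k => ‖v1 (φ k)‖ ^ 2) atTop (𝓝 (a1 ^ 2)) := hta1'.pow 2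
    have h2 : Tendsto (fun k => ‖v2 (φ k)‖ ^ 2) atTop (𝓝 (a2 ^ 2)) := hta2'.pow 2
    exact (h1.add h2).congr fun k => (hsum_norm (φ k)).symm
  have hcosttend : Tendsto (fun k => cost l g 0 T (ys (φ k)) (as (φ k))) atTop
      (𝓝 ((a1 ^ 2 + a2 ^ 2) / 2 + (∫ τ in (0:ℝ)..T, l (y τ) τ) + g (y T))) := by
    have := ((hsqn.div_const 2).add (hIln.comp hφt)).add (hgTn.comp hφt)
    exact this.congr fun k => (hcostn (φ k)).symm
  -- conclusion
  refine ⟨α, hGamma, ?_⟩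
  intro q hq
  obtain ⟨zs, bs, hzG, hzu, hbnorm, hzcost⟩ := hap q.1 q.2 (by simpa using hq) xs hxsS hxsx
  have hle : ∀ k, cost l g 0 T (ys (φ k)) (as (φ k)) ≤ cost l g 0 T (zs (φ k)) (bs (φ k)) :=
    fun k => hmin (φ k) _ (hzG (φ k))
  have h2 := le_of_tendsto_of_tendsto' hcosttend (hzcost.comp hφt) hle
  have h3 : cost l g 0 T y α ≤ (a1 ^ 2 + a2 ^ 2) / 2 + (∫ τ in (0:ℝ)..T, l (y τ) τ) + g (y T) := by
    rw [hcostd y α hsqαii hIly_int]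
    linarith
  linarith
end
end

section
/- If the point x ∈ Σ is unreachable, then Γ^{opt}[x] consists exactly of the constant trajectory with null control: Γ^{opt}[x] = {(y,α)} where y(s)=x for all s ∈ [0,T] and α ≡ 0. -/
open MeasureTheory Set Filter Topology

noncomputable section

open intervalIntegral in

lemma flip_int {f : ℝ → ℝ} {s T : ℝ} (hs0 : 0 ≤ s) (hsT : s ≤ T)
    (hf : IntervalIntegrable f volume 0 s) :
    IntervalIntegrable (fun τ => if τ ≤ s then f (s - τ) else 0) volume 0 T ∧
    (∀ r, 0 ≤ r → r ≤ s →
      (∫ τ in (0:ℝ)..r, if τ ≤ s then f (s - τ) else 0) = ∫ τ in (s - r)..s, f τ) ∧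
    (∀ r, s ≤ r → r ≤ T →
      (∫ τ in (0:ℝ)..r, if τ ≤ s then f (s - τ) else 0) = ∫ τ in (0:ℝ)..s, f τ) := by
  set F := fun τ => if τ ≤ s then f (s - τ) else 0 with hF
  have hg : IntervalIntegrable (fun τ => f (s - τ)) volume 0 s := by
    simpa using (hf.comp_sub_left s).symm

  have hF0s : IntervalIntegrable F volume 0 s := by
    refine hg.congr ?_
    intro τ hτ
    rw [uIoc_of_le hs0] at hτ
    simp [hF, hτ.2]
  have hFzero : ∀ r, s ≤ r → IntervalIntegrable F volume s r := by
    intro r hr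
    refine (_root_.intervalIntegrable_const (c := (0:ℝ))).congr ?_
    intro τ hτ
    rw [uIoc_of_le hr] at hτ
    simp [hF, not_le.mpr hτ.1]
  have hii : ∀ r, 0 ≤ r → r ≤ s →
      (∫ τ in (0:ℝ)..r, F τ) = ∫ τ in (s - r)..s, f τ := by
    intro r hr0 hrs
    have : (∫ τ in (0:ℝ)..r, F τ) = ∫ τ in (0:ℝ)..r, f (s - τ) := by
      refine integral_congr ?_
      intro τ hτ
      rw [uIcc_of_le hr0] at hτ
      simp [hF, le_trans hτ.2 hrs]
    rw [this]
    have := integral_comp_sub_left f s (a := 0) (b := r)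
    simpa using this
  refine ⟨hF0s.trans (hFzero T hsT), hii, ?_⟩
  intro r hsr hrT
  have hsplit := integral_add_adjacent_intervals (μ := volume) hF0s (hFzero r hsr)
  have hz : (∫ τ in s..r, F τ) = 0 := by
    rw [show (0:ℝ) = ∫ τ in s..r, (0:ℝ) by simp]
    refine integral_congr_ae ?_
    refine ae_of_all _ ?_
    intro τ hτ
    rw [uIoc_of_le hsr] at hτ
    simp [hF, not_le.mpr hτ.1]
  have h0s := hii s hs0 le_rfl
  rw [hz, add_zero] at hsplit
  rw [← hsplit, h0s, sub_self]


lemma traj_const {ν T : ℝ} {S : Set (ℝ × ℝ)} {x : ℝ × ℝ} (hT : 0 ≤ T) (hx : x ∈ S)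
    (hun : Unreachable ν S T x) {y α : ℝ → ℝ × ℝ}
    (hmem : (y, α) ∈ Gamma ν S 0 T x) : ∀ s ∈ Icc (0:ℝ) T, y s = x := by
  obtain ⟨⟨hαm, hint1, hint2, heq1, heq2, hS⟩, hL2⟩ := hmem
  have h0T : (0:ℝ) ∈ Icc (0:ℝ) T := ⟨le_rfl, hT⟩
  have hy0 : y 0 = x := by
    have h1 := heq1 0 h0T
    have h2 := heq2 0 h0T
    simp at h1 h2
    exact Prod.ext h1 h2
  intro s hs
  by_contra hne
  have hs0 : 0 ≤ s := hs.1
  have hsT : s ≤ T := hs.2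
  have hmono : ∀ a b : ℝ, 0 ≤ a → a ≤ b → b ≤ T → ∀ {f : ℝ → ℝ},
      IntervalIntegrable f volume 0 T → IntervalIntegrable f volume a b := by
    intro a b ha hab hbT f hf
    refine hf.mono_set ?_
    rw [uIcc_of_le hab, uIcc_of_le hT]
    exact Icc_subset_Icc ha hbT
  set b := y s with hb
  set z : ℝ → ℝ × ℝ := fun τ => if τ ≤ s then y (s - τ) else x with hz
  set β : ℝ → ℝ × ℝ := fun τ =>
    (if τ ≤ s then -((α (s - τ)).1) else 0, if τ ≤ s then -((α (s - τ)).2) else 0) with hβ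
  have hf1 : IntervalIntegrable (fun u => -((α u).1)) volume 0 s :=
    (hmono 0 s le_rfl hs0 hsT hint1).neg
  have hf2 : IntervalIntegrable (fun u => -(|(y u).1| ^ ν * (α u).2)) volume 0 s :=
    (hmono 0 s le_rfl hs0 hsT hint2).neg
  have hfq : IntervalIntegrable (fun u => sq2 (α u)) volume 0 s :=
    hmono 0 s le_rfl hs0 hsT hL2
  obtain ⟨F1int, F1a, F1b⟩ := flip_int hs0 hsT hf1
  obtain ⟨F2int, F2a, F2b⟩ := flip_int hs0 hsT hf2
  obtain ⟨Fqint, _, _⟩ := flip_int hs0 hsT hfq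
  have hzmem : ∀ τ ∈ Icc (0:ℝ) T, z τ ∈ S := by
    intro τ hτ
    by_cases h : τ ≤ s <;> simp only [hz, h, if_true, if_false]
    · exact hS (s - τ) ⟨by linarith [hτ.1], by linarith [hτ.1]⟩
    · exact hx
  have hz1 : ∀ τ, τ ≤ s → (z τ).1 = (y (s - τ)).1 := by intro τ h; simp [hz, h]
  have hprod : (fun τ => |(z τ).1| ^ ν * (β τ).2)
      = fun τ => if τ ≤ s then (fun u => -(|(y u).1| ^ ν * (α u).2)) (s - τ) else 0 := by
    funext τ
    by_cases h : τ ≤ s <;> simp [hz, hβ, h, mul_neg]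
  have hsq : (fun τ => sq2 (β τ))
      = fun τ => if τ ≤ s then (fun u => sq2 (α u)) (s - τ) else 0 := by
    funext τ
    by_cases h : τ ≤ s <;> simp [hβ, h, sq2]
  have key1 : ∀ r ∈ Icc (0:ℝ) T, (z r).1 = b.1 + ∫ τ in (0:ℝ)..r, (β τ).1 := by
    intro r hr
    have hβ1 : (fun τ => (β τ).1)
        = fun τ => if τ ≤ s then (fun u => -((α u).1)) (s - τ) else 0 := rfl
    by_cases h : r ≤ s
    · rw [hβ1, F1a r hr.1 h]
      have hadj : (∫ τ in (0:ℝ)..(s - r), (α τ).1) + (∫ τ in (s - r)..s, (α τ).1)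
          = ∫ τ in (0:ℝ)..s, (α τ).1 :=
        intervalIntegral.integral_add_adjacent_intervals (hmono 0 (s - r) le_rfl (by linarith [hr.1]) (by linarith [hr.1]) hint1)
          (hmono (s - r) s (by linarith [hr.1]) (by linarith [hr.1]) hsT hint1)
      have e1 := heq1 (s - r) ⟨by linarith [hr.1], by linarith [hr.1]⟩
      have e2 := heq1 s hs
      have : (∫ τ in (s - r)..s, (fun u => -((α u).1)) τ) = - ∫ τ in (s - r)..s, (α τ).1 := by
        simp
      rw [this]
      simp only [hz, h, if_true, hb]
      rw [e1, e2]
      linarith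
    · push_neg at h
      rw [hβ1, F1b r h.le hr.2]
      have e2 := heq1 s hs
      have : (∫ τ in (0:ℝ)..s, (fun u => -((α u).1)) τ) = - ∫ τ in (0:ℝ)..s, (α τ).1 := by simp
      rw [this]
      simp only [hz, not_le.mpr h, if_false, hb]
      rw [e2]
      ring
  have key2 : ∀ r ∈ Icc (0:ℝ) T, (z r).2 = b.2 + ∫ τ in (0:ℝ)..r, |(z τ).1| ^ ν * (β τ).2 := by
    intro r hr
    rw [show (∫ τ in (0:ℝ)..r, |(z τ).1| ^ ν * (β τ).2)
        = ∫ τ in (0:ℝ)..r, (fun τ => if τ ≤ s then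
            (fun u => -(|(y u).1| ^ ν * (α u).2)) (s - τ) else 0) τ by rw [← hprod]]
    by_cases h : r ≤ s
    · rw [F2a r hr.1 h]
      have hadj : (∫ τ in (0:ℝ)..(s - r), |(y τ).1| ^ ν * (α τ).2)
            + (∫ τ in (s - r)..s, |(y τ).1| ^ ν * (α τ).2)
          = ∫ τ in (0:ℝ)..s, |(y τ).1| ^ ν * (α τ).2 :=
        intervalIntegral.integral_add_adjacent_intervals (hmono 0 (s - r) le_rfl (by linarith [hr.1]) (by linarith [hr.1]) hint2)
          (hmono (s - r) s (by linarith [hr.1]) (by linarith [hr.1]) hsT hint2)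
      have e1 := heq2 (s - r) ⟨by linarith [hr.1], by linarith [hr.1]⟩
      have e2 := heq2 s hs
      have : (∫ τ in (s - r)..s, (fun u => -(|(y u).1| ^ ν * (α u).2)) τ)
          = - ∫ τ in (s - r)..s, |(y τ).1| ^ ν * (α τ).2 := by simp
      rw [this]
      simp only [hz, h, if_true, hb]
      rw [e1, e2]
      linarith
    · push_neg at h
      rw [F2b r h.le hr.2]
      have e2 := heq2 s hs
      have : (∫ τ in (0:ℝ)..s, (fun u => -(|(y u).1| ^ ν * (α u).2)) τ)
          = - ∫ τ in (0:ℝ)..s, |(y τ).1| ^ ν * (α τ).2 := by simp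
      rw [this]
      simp only [hz, not_le.mpr h, if_false, hb]
      rw [e2]
      ring
  have hβm : Measurable β := by
    refine Measurable.prodMk ?_ ?_ <;>
    · refine Measurable.ite measurableSet_Iic ?_ measurable_const
      exact Measurable.neg (by
        first
        | exact (measurable_fst.comp hαm).comp (measurable_const.sub measurable_id)
        | exact (measurable_snd.comp hαm).comp (measurable_const.sub measurable_id))
  have hbS : b ∈ S := hS s hs
  refine hun b ⟨hbS, by simpa using hne⟩ ⟨(z, β), ⟨⟨hβm, F1int, by rw [hprod]; exact F2int,
    key1, key2, hzmem⟩, by unfold InL2; rw [hsq]; exact Fqint⟩, ?_⟩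
  by_cases h : T ≤ s
  · have : s = T := le_antisymm hsT h
    simp [hz, h, this, hy0]
  · simp [hz, h]

set_option maxHeartbeats 1000000 in
/-- if `x` is unreachable then `Γ^{opt}[x]` consists exactly of the constant
trajectory `y ≡ x` with null control `α ≡ 0`. -/
theorem unreachable_gammaOpt_singleton
    (T ν : ℝ) (hT : 0 < T) (hν : 0 < ν)
    (S : Set (ℝ × ℝ)) (hSc : IsCompact S) (hSne : S.Nonempty)
    (l : ℝ × ℝ → ℝ → ℝ) (g : ℝ × ℝ → ℝ)
    (hl : ContinuousOn (fun q : (ℝ × ℝ) × ℝ => l q.1 q.2) (S ×ˢ Icc 0 T))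
    (hg : ContinuousOn g S)
    (x : ℝ × ℝ) (hx : x ∈ S)
    (hun : Unreachable ν S T x) :
    ((fun _ : ℝ => x), (fun _ : ℝ => ((0 : ℝ), (0 : ℝ)))) ∈ GammaOpt ν S l g 0 T x ∧
    ∀ p ∈ GammaOpt ν S l g 0 T x,
      (∀ s ∈ Icc (0 : ℝ) T, p.1 s = x) ∧
      (∀ᵐ τ ∂(volume.restrict (Icc (0 : ℝ) T)), p.2 τ = 0) := by
  have hT' : (0:ℝ) ≤ T := hT.le
  have hlx : IntervalIntegrable (fun τ => l x τ) volume 0 T := by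
    have hc : ContinuousOn (fun τ : ℝ => l x τ) (Icc 0 T) := by
      have : ContinuousOn (fun τ : ℝ => ((x, τ) : (ℝ × ℝ) × ℝ)) (Icc 0 T) :=
        (continuous_const.prodMk continuous_id).continuousOn
      exact hl.comp this (fun τ hτ => ⟨hx, hτ⟩)
    rw [← uIcc_of_le hT'] at hc
    exact hc.intervalIntegrable
  have hconstGamma : ((fun _ : ℝ => x), (fun _ : ℝ => ((0 : ℝ), (0 : ℝ)))) ∈ Gamma ν S 0 T x := by
    have h0 : IntervalIntegrable (fun _ : ℝ => (0:ℝ)) volume 0 T := _root_.intervalIntegrable_const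
    refine ⟨⟨measurable_const, by simpa using h0, by simpa using h0, by simp, by simp,
      fun s _ => hx⟩, ?_⟩
    unfold InL2
    simpa [sq2] using h0
  have hcostconst : cost l g 0 T (fun _ : ℝ => x) (fun _ : ℝ => ((0 : ℝ), (0 : ℝ)))
      = (∫ τ in (0:ℝ)..T, l x τ) + g x := by
    unfold cost
    congr 1
    refine intervalIntegral.integral_congr fun τ _ => ?_
    simp [sq2]
  have hcostq : ∀ q ∈ Gamma ν S 0 T x,
      cost l g 0 T q.1 q.2
        = (∫ τ in (0:ℝ)..T, sq2 (q.2 τ) / 2) + (∫ τ in (0:ℝ)..T, l x τ) + g x := by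
    intro q hq
    have hqx : ∀ s ∈ Icc (0:ℝ) T, q.1 s = x := by
      have := traj_const hT' hx hun (y := q.1) (α := q.2) (by exact hq)
      exact this
    unfold cost
    have h1 : (∫ τ in (0:ℝ)..T, (sq2 (q.2 τ) / 2 + l (q.1 τ) τ))
        = ∫ τ in (0:ℝ)..T, (sq2 (q.2 τ) / 2 + l x τ) := by
      refine intervalIntegral.integral_congr fun τ hτ => ?_
      rw [uIcc_of_le hT'] at hτ
      rw [hqx τ hτ]
    have h2 : (∫ τ in (0:ℝ)..T, (sq2 (q.2 τ) / 2 + l x τ))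
        = (∫ τ in (0:ℝ)..T, sq2 (q.2 τ) / 2) + ∫ τ in (0:ℝ)..T, l x τ :=
      intervalIntegral.integral_add (hq.2.div_const 2) hlx
    rw [h1, h2, hqx T ⟨hT', le_rfl⟩]
  have hnonneg : ∀ (α : ℝ → ℝ × ℝ), 0 ≤ ∫ τ in (0:ℝ)..T, sq2 (α τ) / 2 :=
    fun α => intervalIntegral.integral_nonneg hT'
      (fun u _ => by unfold sq2; positivity)
  have hopt : ((fun _ : ℝ => x), (fun _ : ℝ => ((0 : ℝ), (0 : ℝ)))) ∈ GammaOpt ν S l g 0 T x := by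
    refine ⟨hconstGamma, fun q hq => ?_⟩
    rw [hcostconst, hcostq q hq]
    have := hnonneg q.2
    linarith
  refine ⟨hopt, fun p hp => ?_⟩
  have hpx : ∀ s ∈ Icc (0:ℝ) T, p.1 s = x :=
    traj_const hT' hx hun (y := p.1) (α := p.2) (by exact hp.1)
  refine ⟨hpx, ?_⟩
  have hle : cost l g 0 T p.1 p.2 ≤ cost l g 0 T (fun _ : ℝ => x) (fun _ : ℝ => ((0:ℝ), (0:ℝ))) :=
    hp.2 _ hconstGamma
  rw [hcostconst, hcostq p hp.1] at hle
  have hI0 : (∫ τ in (0:ℝ)..T, sq2 (p.2 τ) / 2) = 0 :=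
    le_antisymm (by linarith) (hnonneg p.2)
  have hIdiv : (∫ τ in (0:ℝ)..T, sq2 (p.2 τ) / 2) = (∫ τ in (0:ℝ)..T, sq2 (p.2 τ)) / 2 :=
    intervalIntegral.integral_div 2 _
  have hI : (∫ τ in Ioc (0:ℝ) T, sq2 (p.2 τ)) = 0 := by
    rw [← intervalIntegral.integral_of_le hT']
    rw [hIdiv] at hI0
    linarith
  have hint : IntegrableOn (fun τ => sq2 (p.2 τ)) (Ioc (0:ℝ) T) volume := by
    have := hp.1.2
    rw [InL2, intervalIntegrable_iff, uIoc_of_le hT'] at this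
    exact this
  have hnn : 0 ≤ᵐ[volume.restrict (Ioc (0:ℝ) T)] fun τ => sq2 (p.2 τ) := by
    refine ae_of_all _ fun τ => ?_
    show (0:ℝ) ≤ sq2 (p.2 τ)
    unfold sq2
    positivity
  have hae : (fun τ => sq2 (p.2 τ)) =ᵐ[volume.restrict (Ioc (0:ℝ) T)] 0 :=
    (MeasureTheory.integral_eq_zero_iff_of_nonneg_ae hnn hint).mp hI
  have hres : volume.restrict (Icc (0:ℝ) T) = volume.restrict (Ioc (0:ℝ) T) :=
    (Measure.restrict_congr_set Ioc_ae_eq_Icc).symm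
  rw [hres]
  filter_upwards [hae] with τ hτ
  have h1 : ((p.2 τ).1) ^ 2 + ((p.2 τ).2) ^ 2 = 0 := hτ
  have h2 : (p.2 τ).1 = 0 := by nlinarith [sq_nonneg (p.2 τ).1, sq_nonneg (p.2 τ).2]
  have h3 : (p.2 τ).2 = 0 := by nlinarith [sq_nonneg (p.2 τ).1, sq_nonneg (p.2 τ).2]
  exact Prod.ext h2 h3
end
end

section
/- If the point x ∈ Σ is unreachable, then Γ^{opt}[x] has the closed graph property: for every sequence x_n ∈ Σ with x_n → x and every sequence of optimal trajectories (y_n,α_n) ∈ Γ^{opt}[x_n] such that y_n converges uniformly on [0,T] to a curve y, there exists a measurable α such that (y,α) ∈ Γ^{opt}[x]. -/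
open MeasureTheory Set Filter Topology

noncomputable section

open scoped RealInnerProductSpace ENNReal NNReal

lemma sq2_nonneg (v : ℝ × ℝ) : 0 ≤ sq2 v := add_nonneg (sq_nonneg _) (sq_nonneg _)

lemma sq2_neg (v : ℝ × ℝ) : sq2 (-v) = sq2 v := by simp [sq2]

lemma intervalIntegrable_congr_ae' {f g : ℝ → ℝ} {a b : ℝ}
    (h : IntervalIntegrable f volume a b)
    (he : ∀ᵐ τ ∂(volume : Measure ℝ), τ ∈ Set.uIoc a b → f τ = g τ) :
    IntervalIntegrable g volume a b := by
  rw [intervalIntegrable_iff] at h ⊢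
  exact h.congr ((ae_restrict_iff' measurableSet_uIoc).mpr he)

lemma ae_ne_vol (u : ℝ) : ∀ᵐ τ ∂(volume : Measure ℝ), τ ≠ u := by
  rw [MeasureTheory.ae_iff]
  simp only [not_ne_iff, setOf_eq_eq_singleton]
  exact measure_singleton u

lemma Admissible.continuousOn_traj {ν T : ℝ} {S : Set (ℝ × ℝ)} {x : ℝ × ℝ} {y α : ℝ → ℝ × ℝ}
    (hT : 0 ≤ T) (h : Admissible ν S 0 T x y α) : ContinuousOn y (Icc 0 T) := by
  obtain ⟨hm, hi1, hi2, he1, he2, hmem⟩ := h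
  have c1 : ContinuousOn (fun s => x.1 + ∫ τ in (0:ℝ)..s, (α τ).1) (Icc 0 T) := by
    have := intervalIntegral.continuousOn_primitive_interval' hi1
      (by rw [uIcc_of_le hT]; exact left_mem_Icc.mpr hT)
    rw [uIcc_of_le hT] at this
    exact continuousOn_const.add this
  have c2 : ContinuousOn (fun s => x.2 + ∫ τ in (0:ℝ)..s, |(y τ).1| ^ ν * (α τ).2) (Icc 0 T) := by
    have := intervalIntegral.continuousOn_primitive_interval' hi2
      (by rw [uIcc_of_le hT]; exact left_mem_Icc.mpr hT)
    rw [uIcc_of_le hT] at this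
    exact continuousOn_const.add this
  exact (c1.prodMk c2).congr fun s hs => Prod.ext (he1 s hs) (he2 s hs)

lemma Admissible.y_zero {ν T : ℝ} {S : Set (ℝ × ℝ)} {x : ℝ × ℝ} {y α : ℝ → ℝ × ℝ}
    (hT : 0 ≤ T) (h : Admissible ν S 0 T x y α) : y 0 = x := by
  obtain ⟨-, -, -, he1, he2, -⟩ := h
  have h1 := he1 0 (left_mem_Icc.mpr hT)
  have h2 := he2 0 (left_mem_Icc.mpr hT)
  rw [intervalIntegral.integral_same, add_zero] at h1 h2
  exact Prod.ext h1 h2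

lemma traj_const_of_unreachable {ν T : ℝ} (hT : 0 ≤ T) {S : Set (ℝ × ℝ)} {x : ℝ × ℝ}
    (hxS : x ∈ S) (hun : Unreachable ν S T x) {p : (ℝ → ℝ × ℝ) × (ℝ → ℝ × ℝ)}
    (hp : p ∈ Gamma ν S 0 T x) : ∀ u ∈ Icc (0:ℝ) T, p.1 u = x := by
  obtain ⟨hadm, hL2'⟩ := hp
  have hy0 : p.1 0 = x := hadm.y_zero hT
  set y : ℝ → ℝ × ℝ := p.1 with hydef
  set α : ℝ → ℝ × ℝ := p.2 with hαdef
  have hL2 : IntervalIntegrable (fun τ => sq2 (α τ)) volume 0 T := hL2'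
  obtain ⟨hm, hi1, hi2, he1, he2, hmemS⟩ := hadm
  intro u hu
  by_contra hne
  have hu0 : (0:ℝ) ≤ u := hu.1
  have huT : u ≤ T := hu.2
  set z : ℝ → ℝ × ℝ := fun s => if s ≤ u then y (u - s) else x with hzdef
  set β : ℝ → ℝ × ℝ := fun s => if s < u then -α (u - s) else 0 with hβdef
  have hzval : ∀ s, s ≤ u → z s = y (u - s) := fun s hs => if_pos hs
  have hzval' : ∀ s, ¬ s ≤ u → z s = x := fun s hs => if_neg hs
  have hβval : ∀ s, s < u → β s = -α (u - s) := fun s hs => if_pos hs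
  have hβval' : ∀ s, ¬ s < u → β s = 0 := fun s hs => if_neg hs
  have hsub0u : Set.uIcc (0:ℝ) u ⊆ Set.uIcc (0:ℝ) T := by
    rw [uIcc_of_le hu0, uIcc_of_le hT]; exact Icc_subset_Icc le_rfl huT
  have hsubuT : Set.uIcc u T ⊆ Set.uIcc (0:ℝ) T := by
    rw [uIcc_of_le huT, uIcc_of_le hT]; exact Icc_subset_Icc hu0 le_rfl
  have hi1u := hi1.mono_set hsub0u
  have hi2u := hi2.mono_set hsub0u
  have hL2u := hL2.mono_set hsub0u
  -- reversed integrands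
  have hrev1int : IntervalIntegrable (fun s => (α (u - s)).1) volume 0 u := by
    have h' := (hi1u.comp_sub_left u).symm
    rw [sub_self, sub_zero] at h'
    exact h'
  have hrev2int : IntervalIntegrable (fun s => |(y (u - s)).1| ^ ν * (α (u - s)).2) volume 0 u := by
    have h' := (hi2u.comp_sub_left u).symm
    rw [sub_self, sub_zero] at h'
    exact h'
  have hrevsqint : IntervalIntegrable (fun s => sq2 (α (u - s))) volume 0 u := by
    have h' := (hL2u.comp_sub_left u).symm
    rw [sub_self, sub_zero] at h'
    exact h'
  -- β integrabilities
  have hβ1int0u : IntervalIntegrable (fun s => (β s).1) volume 0 u := by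
    refine intervalIntegrable_congr_ae' hrev1int.neg ?_
    filter_upwards [ae_ne_vol u] with τ hτ hmem
    rw [uIoc_of_le hu0] at hmem
    have hlt : τ < u := lt_of_le_of_ne hmem.2 hτ
    rw [hβval τ hlt]
    simp
  have hβ1intuT : IntervalIntegrable (fun s => (β s).1) volume u T := by
    refine intervalIntegrable_congr_ae' (intervalIntegrable_const (c := (0:ℝ))) ?_
    filter_upwards with τ hmem
    rw [uIoc_of_le huT] at hmem
    rw [hβval' τ (not_lt.mpr hmem.1.le)]
    simp
  have hβ1int : IntervalIntegrable (fun s => (β s).1) volume 0 T := hβ1int0u.trans hβ1intuT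
  have hzw : ∀ τ, τ < u →
      |(z τ).1| ^ ν * (β τ).2 = -(|(y (u - τ)).1| ^ ν * (α (u - τ)).2) := by
    intro τ hτ
    rw [hzval τ hτ.le, hβval τ hτ]
    simp [mul_neg]
  have hβ2int0u : IntervalIntegrable (fun s => |(z s).1| ^ ν * (β s).2) volume 0 u := by
    refine intervalIntegrable_congr_ae' hrev2int.neg ?_
    filter_upwards [ae_ne_vol u] with τ hτ hmem
    rw [uIoc_of_le hu0] at hmem
    rw [hzw τ (lt_of_le_of_ne hmem.2 hτ)]
    simp
  have hβ2intuT : IntervalIntegrable (fun s => |(z s).1| ^ ν * (β s).2) volume u T := by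
    refine intervalIntegrable_congr_ae' (intervalIntegrable_const (c := (0:ℝ))) ?_
    filter_upwards with τ hmem
    rw [uIoc_of_le huT] at hmem
    rw [hβval' τ (not_lt.mpr hmem.1.le)]
    simp
  have hβ2int : IntervalIntegrable (fun s => |(z s).1| ^ ν * (β s).2) volume 0 T :=
    hβ2int0u.trans hβ2intuT
  have hβsq0u : IntervalIntegrable (fun s => sq2 (β s)) volume 0 u := by
    refine intervalIntegrable_congr_ae' hrevsqint ?_
    filter_upwards [ae_ne_vol u] with τ hτ hmem
    rw [uIoc_of_le hu0] at hmem
    rw [hβval τ (lt_of_le_of_ne hmem.2 hτ), sq2_neg]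
  have hβsquT : IntervalIntegrable (fun s => sq2 (β s)) volume u T := by
    refine intervalIntegrable_congr_ae' (intervalIntegrable_const (c := (0:ℝ))) ?_
    filter_upwards with τ hmem
    rw [uIoc_of_le huT] at hmem
    rw [hβval' τ (not_lt.mpr hmem.1.le)]
    simp [sq2]
  have hβL2 : IntervalIntegrable (fun s => sq2 (β s)) volume 0 T := hβsq0u.trans hβsquT
  -- key reversed identities on [0, u]
  have hkey1 : ∀ s ∈ Icc (0:ℝ) u, ∫ τ in (0:ℝ)..s, (β τ).1 = (y (u - s)).1 - (y u).1 := by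
    intro s hs
    have hs0 : (0:ℝ) ≤ s := hs.1
    have hsu : s ≤ u := hs.2
    have hstep1 : ∫ τ in (0:ℝ)..s, (β τ).1 = ∫ τ in (0:ℝ)..s, -(α (u - τ)).1 := by
      apply intervalIntegral.integral_congr_ae
      filter_upwards [ae_ne_vol u] with τ hτ hmem
      rw [uIoc_of_le hs0] at hmem
      rw [hβval τ (lt_of_le_of_ne (hmem.2.trans hsu) hτ)]
      simp
    have hstep3 : ∫ τ in (0:ℝ)..s, (α (u - τ)).1 = ∫ τ in (u - s)..u, (α τ).1 := by
      have := intervalIntegral.integral_comp_sub_left (a := 0) (b := s) (fun τ => (α τ).1) u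
      simpa using this
    have hius : IntervalIntegrable (fun τ => (α τ).1) volume 0 (u - s) :=
      hi1.mono_set (by
        rw [uIcc_of_le (by linarith : (0:ℝ) ≤ u - s), uIcc_of_le hT]
        exact Icc_subset_Icc le_rfl (by linarith))
    have hisu : IntervalIntegrable (fun τ => (α τ).1) volume (u - s) u :=
      hi1.mono_set (by
        rw [uIcc_of_le (by linarith : u - s ≤ u), uIcc_of_le hT]
        exact Icc_subset_Icc (by linarith) huT)
    have hadd := intervalIntegral.integral_add_adjacent_intervals hius hisu
    have e1 := he1 (u - s) ⟨by linarith, by linarith⟩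
    have e2 := he1 u ⟨hu0, huT⟩
    rw [hstep1, intervalIntegral.integral_neg, hstep3]
    linarith
  have hkey2 : ∀ s ∈ Icc (0:ℝ) u,
      ∫ τ in (0:ℝ)..s, |(z τ).1| ^ ν * (β τ).2 = (y (u - s)).2 - (y u).2 := by
    intro s hs
    have hs0 : (0:ℝ) ≤ s := hs.1
    have hsu : s ≤ u := hs.2
    have hstep1 : ∫ τ in (0:ℝ)..s, |(z τ).1| ^ ν * (β τ).2
        = ∫ τ in (0:ℝ)..s, -(|(y (u - τ)).1| ^ ν * (α (u - τ)).2) := by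
      apply intervalIntegral.integral_congr_ae
      filter_upwards [ae_ne_vol u] with τ hτ hmem
      rw [uIoc_of_le hs0] at hmem
      rw [hzw τ (lt_of_le_of_ne (hmem.2.trans hsu) hτ)]
    have hstep3 : ∫ τ in (0:ℝ)..s, |(y (u - τ)).1| ^ ν * (α (u - τ)).2
        = ∫ τ in (u - s)..u, |(y τ).1| ^ ν * (α τ).2 := by
      have := intervalIntegral.integral_comp_sub_left (a := 0) (b := s)
        (fun τ => |(y τ).1| ^ ν * (α τ).2) u
      simpa using this
    have hius : IntervalIntegrable (fun τ => |(y τ).1| ^ ν * (α τ).2) volume 0 (u - s) :=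
      hi2.mono_set (by
        rw [uIcc_of_le (by linarith : (0:ℝ) ≤ u - s), uIcc_of_le hT]
        exact Icc_subset_Icc le_rfl (by linarith))
    have hisu : IntervalIntegrable (fun τ => |(y τ).1| ^ ν * (α τ).2) volume (u - s) u :=
      hi2.mono_set (by
        rw [uIcc_of_le (by linarith : u - s ≤ u), uIcc_of_le hT]
        exact Icc_subset_Icc (by linarith) huT)
    have hadd := intervalIntegral.integral_add_adjacent_intervals hius hisu
    have e1 := he2 (u - s) ⟨by linarith, by linarith⟩
    have e2 := he2 u ⟨hu0, huT⟩
    rw [hstep1, intervalIntegral.integral_neg, hstep3]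
    linarith
  -- full identities
  have hβ1intus : ∀ s, u ≤ s → s ≤ T → IntervalIntegrable (fun τ => (β τ).1) volume u s :=
    fun s hus hsT => hβ1int.mono_set (by
      rw [uIcc_of_le hus, uIcc_of_le hT]; exact Icc_subset_Icc hu0 hsT)
  have hβ2intus : ∀ s, u ≤ s → s ≤ T →
      IntervalIntegrable (fun τ => |(z τ).1| ^ ν * (β τ).2) volume u s :=
    fun s hus hsT => hβ2int.mono_set (by
      rw [uIcc_of_le hus, uIcc_of_le hT]; exact Icc_subset_Icc hu0 hsT)
  have hz1id : ∀ s ∈ Icc (0:ℝ) T, (z s).1 = (y u).1 + ∫ τ in (0:ℝ)..s, (β τ).1 := by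
    intro s hs
    by_cases hsu : s ≤ u
    · rw [hzval s hsu, hkey1 s ⟨hs.1, hsu⟩]; ring
    · have hus : u ≤ s := (not_le.mp hsu).le
      have hadd := intervalIntegral.integral_add_adjacent_intervals hβ1int0u
        (hβ1intus s hus hs.2)
      have hzero : ∫ τ in u..s, (β τ).1 = 0 := by
        have : EqOn (fun τ => (β τ).1) (fun _ => (0:ℝ)) (Set.uIcc u s) := by
          intro τ hτ
          rw [uIcc_of_le hus] at hτ
          show (β τ).1 = (0:ℝ)
          rw [hβval' τ (not_lt.mpr hτ.1)]
          simp
        rw [intervalIntegral.integral_congr this]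
        simp
      have h0u := hkey1 u ⟨hu0, le_rfl⟩
      rw [sub_self, hy0] at h0u
      rw [hzval' s hsu, ← hadd, hzero, h0u]
      ring
  have hz2id : ∀ s ∈ Icc (0:ℝ) T,
      (z s).2 = (y u).2 + ∫ τ in (0:ℝ)..s, |(z τ).1| ^ ν * (β τ).2 := by
    intro s hs
    by_cases hsu : s ≤ u
    · rw [hzval s hsu, hkey2 s ⟨hs.1, hsu⟩]; ring
    · have hus : u ≤ s := (not_le.mp hsu).le
      have hadd := intervalIntegral.integral_add_adjacent_intervals hβ2int0u
        (hβ2intus s hus hs.2)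
      have hzero : ∫ τ in u..s, |(z τ).1| ^ ν * (β τ).2 = 0 := by
        have : EqOn (fun τ => |(z τ).1| ^ ν * (β τ).2) (fun _ => (0:ℝ)) (Set.uIcc u s) := by
          intro τ hτ
          rw [uIcc_of_le hus] at hτ
          show |(z τ).1| ^ ν * (β τ).2 = (0:ℝ)
          rw [hβval' τ (not_lt.mpr hτ.1)]
          simp
        rw [intervalIntegral.integral_congr this]
        simp
      have h0u := hkey2 u ⟨hu0, le_rfl⟩
      rw [sub_self, hy0] at h0u
      rw [hzval' s hsu, ← hadd, hzero, h0u]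
      ring
  have hzmem : ∀ s ∈ Icc (0:ℝ) T, z s ∈ S := by
    intro s hs
    by_cases hsu : s ≤ u
    · rw [hzval s hsu]
      exact hmemS (u - s) ⟨by linarith [hs.1], by linarith [hs.1]⟩
    · rw [hzval' s hsu]; exact hxS
  have hβmeas : Measurable β := by
    apply Measurable.ite measurableSet_Iio
    · exact (hm.comp (measurable_const.sub measurable_id)).neg
    · exact measurable_const
  have hzT : z T = x := by
    by_cases hTu : T ≤ u
    · have : u = T := le_antisymm huT hTu
      rw [hzval T hTu, this, sub_self, hy0]
    · exact hzval' T hTu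
  exact hun (y u) ⟨hmemS u hu, by simpa using hne⟩
    ⟨(z, β), ⟨⟨hβmeas, hβ1int, hβ2int, hz1id, hz2id, hzmem⟩, hβL2⟩, hzT⟩

theorem weak_cpt {H : Type} [NormedAddCommGroup H] [InnerProductSpace ℝ H]
    [CompleteSpace H] [TopologicalSpace.SeparableSpace H]
    (x : ℕ → H) (K : ℝ) (hK : ∀ n, ‖x n‖ ≤ K) :
    ∃ φ : ℕ → ℕ, StrictMono φ ∧ ∃ z : H,
      ∀ w : H, Tendsto (fun n => ⟪w, x (φ n)⟫) atTop (𝓝 ⟪w, z⟫) := by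
  have hK0 : (0:ℝ) ≤ K := le_trans (norm_nonneg _) (hK 0)
  haveI : Nonempty H := ⟨0⟩
  obtain ⟨d, hd⟩ := TopologicalSpace.exists_dense_seq H
  have hmem : ∀ n, (fun i => ⟪d i, x n⟫) ∈
      Set.pi Set.univ (fun i => Icc (-(‖d i‖ * K)) (‖d i‖ * K)) := by
    intro n i _
    have h1 : |⟪d i, x n⟫| ≤ ‖d i‖ * ‖x n‖ := abs_real_inner_le_norm _ _
    have h2 : ‖d i‖ * ‖x n‖ ≤ ‖d i‖ * K := mul_le_mul_of_nonneg_left (hK n) (norm_nonneg _)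
    exact abs_le.mp (h1.trans h2)
  have hcpt : IsCompact (Set.pi Set.univ (fun i : ℕ => Icc (-(‖d i‖ * K)) (‖d i‖ * K))) :=
    isCompact_univ_pi fun i => isCompact_Icc
  obtain ⟨L, -, φ, hφ, hL⟩ := hcpt.tendsto_subseq hmem
  have hLi : ∀ i, Tendsto (fun n => ⟪d i, x (φ n)⟫) atTop (𝓝 (L i)) := by
    intro i
    exact (tendsto_pi_nhds.mp hL) i
  have key : ∀ w : H, ∃ c : ℝ, Tendsto (fun n => ⟪w, x (φ n)⟫) atTop (𝓝 c) := by
    intro w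
    apply cauchySeq_tendsto_of_complete
    rw [Metric.cauchySeq_iff]
    intro ε hε
    have hε4 : (0:ℝ) < ε / (4 * (K + 1)) := by positivity
    obtain ⟨i, hi⟩ := hd.exists_dist_lt w hε4
    have hcs : CauchySeq (fun n => ⟪d i, x (φ n)⟫) := (hLi i).cauchySeq
    rw [Metric.cauchySeq_iff] at hcs
    obtain ⟨N, hN⟩ := hcs (ε / 2) (by positivity)
    refine ⟨N, fun m hm n hn => ?_⟩
    have hby : ∀ k, dist (⟪w, x (φ k)⟫) (⟪d i, x (φ k)⟫) ≤ ε / (4 * (K + 1)) * K := by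
      intro k
      rw [Real.dist_eq, ← inner_sub_left]
      refine (abs_real_inner_le_norm _ _).trans ?_
      have h1 : ‖w - d i‖ ≤ ε / (4 * (K + 1)) := by
        rw [← dist_eq_norm]; exact hi.le
      calc ‖w - d i‖ * ‖x (φ k)‖ ≤ ‖w - d i‖ * K :=
            mul_le_mul_of_nonneg_left (hK _) (norm_nonneg _)
        _ ≤ ε / (4 * (K + 1)) * K := mul_le_mul_of_nonneg_right h1 hK0
    have hq : ε / (4 * (K + 1)) * K ≤ ε / 4 := by
      rw [div_mul_eq_mul_div, div_le_div_iff₀ (by positivity) (by norm_num)]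
      nlinarith [hε.le, hK0]
    have htri := dist_triangle4 (⟪w, x (φ m)⟫) (⟪d i, x (φ m)⟫)
      (⟪d i, x (φ n)⟫) (⟪w, x (φ n)⟫)
    have h2 := hN m hm n hn
    have h3 := hby m
    have h4 := hby n
    rw [dist_comm (⟪d i, x (φ n)⟫) (⟪w, x (φ n)⟫)] at htri
    linarith
  choose c hc using key
  have cadd : ∀ w₁ w₂, c (w₁ + w₂) = c w₁ + c w₂ := by
    intro w₁ w₂
    refine tendsto_nhds_unique (hc (w₁ + w₂)) ?_
    have := (hc w₁).add (hc w₂)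
    simpa [inner_add_left] using this
  have csmul : ∀ (r : ℝ) (w : H), c (r • w) = r * c w := by
    intro r w
    refine tendsto_nhds_unique (hc (r • w)) ?_
    have := (hc w).const_mul r
    simpa [real_inner_smul_left] using this
  have cbound : ∀ w, ‖c w‖ ≤ K * ‖w‖ := by
    intro w
    have hb : ∀ n, |⟪w, x (φ n)⟫| ≤ ‖w‖ * K := fun n =>
      (abs_real_inner_le_norm _ _).trans (mul_le_mul_of_nonneg_left (hK _) (norm_nonneg _))
    have h := le_of_tendsto (hc w).abs (Eventually.of_forall hb)
    rw [Real.norm_eq_abs]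
    calc |c w| ≤ ‖w‖ * K := h
      _ = K * ‖w‖ := mul_comm _ _
  let G : H →L[ℝ] ℝ := LinearMap.mkContinuous
    { toFun := c, map_add' := cadd, map_smul' := by intro r w; simpa using csmul r w } K cbound
  refine ⟨φ, hφ, (InnerProductSpace.toDual ℝ H).symm G, fun w => ?_⟩
  have h1 : ⟪(InnerProductSpace.toDual ℝ H).symm G, w⟫ = G w :=
    InnerProductSpace.toDual_symm_apply
  rw [real_inner_comm, h1]
  exact hc w

lemma inner_L2_eq {μ : Measure ℝ} {w : ℝ → ℝ} (hw : MemLp w 2 μ)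
    (g : Lp ℝ 2 μ) :
    ⟪hw.toLp w, g⟫ = ∫ τ, w τ * g τ ∂μ := by
  rw [MeasureTheory.L2.inner_def]
  apply integral_congr_ae
  filter_upwards [hw.coeFn_toLp] with τ h1
  rw [h1]
  simp [RCLike.inner_apply, mul_comm]

lemma norm_toLp_le_sqrt {μ : Measure ℝ} {f : ℝ → ℝ} (hf : MemLp f 2 μ) {K : ℝ}
    (hK : ∫ τ, f τ ^ 2 ∂μ ≤ K) : ‖hf.toLp f‖ ≤ Real.sqrt K := by
  have h2 : ‖hf.toLp f‖ ^ 2 = ∫ τ, f τ ^ 2 ∂μ := by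
    rw [← real_inner_self_eq_norm_sq, MeasureTheory.L2.inner_def]
    apply integral_congr_ae
    filter_upwards [hf.coeFn_toLp] with τ h1
    rw [h1]
    simp [RCLike.inner_apply, sq]
  calc ‖hf.toLp f‖ = Real.sqrt (‖hf.toLp f‖ ^ 2) := (Real.sqrt_sq (norm_nonneg _)).symm
    _ ≤ Real.sqrt K := Real.sqrt_le_sqrt (le_trans (le_of_eq h2) hK)


set_option maxHeartbeats 1000000
set_option synthInstance.maxHeartbeats 400000

/-- if `x` is unreachable then `Γ^{opt}[x]` has the closed graph property. -/
theorem unreachable_implies_closed_graph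
    (T ν : ℝ) (hT : 0 < T) (hν : 0 < ν)
    (S : Set (ℝ × ℝ)) (hSc : IsCompact S) (hSne : S.Nonempty)
    (l : ℝ × ℝ → ℝ → ℝ) (g : ℝ × ℝ → ℝ)
    (hl : ContinuousOn (fun q : (ℝ × ℝ) × ℝ => l q.1 q.2) (S ×ˢ Icc 0 T))
    (hg : ContinuousOn g S)
    (x : ℝ × ℝ) (hx : x ∈ S)
    (hun : Unreachable ν S T x) :
    ClosedGraphAt ν S l g 0 T x := by
  intro xs ys as y hxsS hxs hopt hconv
  have hT0 : (0:ℝ) ≤ T := hT.le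
  have hadm : ∀ n, Admissible ν S 0 T (xs n) (ys n) (as n) := fun n => (hopt n).1.1
  have hL2 : ∀ n, IntervalIntegrable (fun τ => sq2 (as n τ)) volume 0 T := fun n => (hopt n).1.2
  have hmeas : ∀ n, Measurable (as n) := fun n => (hadm n).1
  have hi1 : ∀ n, IntervalIntegrable (fun τ => (as n τ).1) volume 0 T := fun n => (hadm n).2.1
  have he1 : ∀ n, ∀ s ∈ Icc (0:ℝ) T, (ys n s).1 = (xs n).1 + ∫ τ in (0:ℝ)..s, (as n τ).1 :=
    fun n => (hadm n).2.2.2.1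
  have he2 : ∀ n, ∀ s ∈ Icc (0:ℝ) T,
      (ys n s).2 = (xs n).2 + ∫ τ in (0:ℝ)..s, |(ys n τ).1| ^ ν * (as n τ).2 :=
    fun n => (hadm n).2.2.2.2.1
  have hmemS : ∀ n, ∀ s ∈ Icc (0:ℝ) T, ys n s ∈ S := fun n => (hadm n).2.2.2.2.2
  have hycont : ∀ n, ContinuousOn (ys n) (Icc 0 T) := fun n => (hadm n).continuousOn_traj hT0
  have hyc : ContinuousOn y (Icc 0 T) := hconv.continuousOn (Eventually.of_forall hycont).frequently
  have hyS : ∀ s ∈ Icc (0:ℝ) T, y s ∈ S := fun s hs =>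
    hSc.isClosed.mem_of_tendsto (hconv.tendsto_at hs)
      (Eventually.of_forall fun n => hmemS n s hs)
  -- bounds on the data
  obtain ⟨M, hM⟩ := (hSc.prod isCompact_Icc).exists_bound_of_continuousOn hl
  obtain ⟨Mg, hMg⟩ := hSc.exists_bound_of_continuousOn hg
  have hM0 : 0 ≤ M := le_trans (norm_nonneg _) (hM (x, 0) ⟨hx, left_mem_Icc.mpr hT0⟩)
  have hMg0 : 0 ≤ Mg := le_trans (norm_nonneg _) (hMg x hx)
  -- uniform L² bound
  have hIK : ∀ n, (∫ τ in (0:ℝ)..T, sq2 (as n τ)) ≤ 4 * (M * T + Mg) := by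
    intro n
    have hconstGam : ((fun _ => xs n, fun _ => (0:ℝ×ℝ)) : (ℝ → ℝ × ℝ) × (ℝ → ℝ × ℝ))
        ∈ Gamma ν S 0 T (xs n) := by
      show Admissible ν S 0 T (xs n) (fun _ => xs n) (fun _ => (0:ℝ×ℝ)) ∧
        InL2 (fun _ => (0:ℝ×ℝ)) 0 T
      constructor
      · refine ⟨measurable_const, ?_, ?_, ?_, ?_, ?_⟩
        · exact intervalIntegrable_const (μ := volume)
        · exact intervalIntegrable_const (μ := volume)
        · intro s hs; simp
        · intro s hs; simp
        · intro s hs; exact hxsS n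
      · show IntervalIntegrable (fun _ => sq2 (0:ℝ×ℝ)) volume 0 T
        exact intervalIntegrable_const
    have hcost := (hopt n).2 _ hconstGam
    have hRHS : cost l g 0 T (fun _ => xs n) (fun _ => (0:ℝ×ℝ)) ≤ M * T + Mg := by
      have h1 : cost l g 0 T (fun _ => xs n) (fun _ => (0:ℝ×ℝ))
          = (∫ τ in (0:ℝ)..T, (sq2 (0:ℝ×ℝ) / 2 + l (xs n) τ)) + g (xs n) := rfl
      have hb : ‖∫ τ in (0:ℝ)..T, (sq2 (0:ℝ×ℝ) / 2 + l (xs n) τ)‖ ≤ M * |T - 0| := by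
        apply intervalIntegral.norm_integral_le_of_norm_le_const
        intro τ hτ
        rw [uIoc_of_le hT0] at hτ
        have hlb := hM (xs n, τ) ⟨hxsS n, Ioc_subset_Icc_self hτ⟩
        have : sq2 (0:ℝ×ℝ) = 0 := by simp [sq2]
        rw [this]
        simpa using hlb
      rw [Real.norm_eq_abs, sub_zero, abs_of_nonneg hT0] at hb
      have hgb : g (xs n) ≤ Mg := le_trans (le_abs_self _)
        (by rw [← Real.norm_eq_abs]; exact hMg _ (hxsS n))
      rw [h1]
      have := abs_le.mp hb
      linarith [this.2]
    have hlint : IntervalIntegrable (fun τ => l (ys n τ) τ) volume 0 T := by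
      apply ContinuousOn.intervalIntegrable
      rw [uIcc_of_le hT0]
      exact hl.comp ((hycont n).prodMk continuousOn_id) (fun τ hτ => ⟨hmemS n τ hτ, hτ⟩)
    have hsplit : cost l g 0 T (ys n) (as n)
        = (∫ τ in (0:ℝ)..T, sq2 (as n τ)) / 2 + (∫ τ in (0:ℝ)..T, l (ys n τ) τ) + g (ys n T) := by
      have h1 : cost l g 0 T (ys n) (as n)
          = (∫ τ in (0:ℝ)..T, (sq2 (as n τ) / 2 + l (ys n τ) τ)) + g (ys n T) := rfl
      rw [h1, intervalIntegral.integral_add ((hL2 n).div_const 2) hlint,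
        intervalIntegral.integral_div]
    have hlb : -(M * T) ≤ ∫ τ in (0:ℝ)..T, l (ys n τ) τ := by
      have hb : ‖∫ τ in (0:ℝ)..T, l (ys n τ) τ‖ ≤ M * |T - 0| := by
        apply intervalIntegral.norm_integral_le_of_norm_le_const
        intro τ hτ
        rw [uIoc_of_le hT0] at hτ
        exact hM (ys n τ, τ) ⟨hmemS n τ (Ioc_subset_Icc_self hτ), Ioc_subset_Icc_self hτ⟩
      rw [Real.norm_eq_abs, sub_zero, abs_of_nonneg hT0] at hb
      linarith [(abs_le.mp hb).1]
    have hgb : -Mg ≤ g (ys n T) := by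
      have := hMg _ (hmemS n T (right_mem_Icc.mpr hT0))
      rw [Real.norm_eq_abs] at this
      linarith [(abs_le.mp this).1]
    rw [hsplit] at hcost
    linarith
  -- L² machinery
  set μ : Measure ℝ := volume.restrict (Ioc 0 T) with hμdef
  haveI hfin : IsFiniteMeasure μ := by
    constructor
    rw [hμdef, Measure.restrict_apply_univ]
    exact measure_Ioc_lt_top
  set K : ℝ := 4 * (M * T + Mg) with hKdef
  have hμmem : ∀ᵐ τ ∂μ, τ ∈ Ioc (0:ℝ) T := by
    rw [hμdef]; exact ae_restrict_mem measurableSet_Ioc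
  have hsqint : ∀ n, Integrable (fun τ => sq2 (as n τ)) μ := by
    intro n
    have h := (intervalIntegrable_iff_integrableOn_Ioc_of_le hT0).mp (hL2 n)
    rwa [hμdef]
  have hsq1int : ∀ n, Integrable (fun τ => ((as n τ).1)^2) μ := by
    intro n
    refine (hsqint n).mono' ((measurable_fst.comp (hmeas n)).pow_const 2).aestronglyMeasurable ?_
    filter_upwards with τ
    rw [Real.norm_eq_abs, abs_of_nonneg (sq_nonneg _)]
    calc ((as n τ).1)^2 ≤ ((as n τ).1)^2 + ((as n τ).2)^2 := le_add_of_nonneg_right (sq_nonneg _)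
      _ = sq2 (as n τ) := rfl
  have hsq2int : ∀ n, Integrable (fun τ => ((as n τ).2)^2) μ := by
    intro n
    refine (hsqint n).mono' ((measurable_snd.comp (hmeas n)).pow_const 2).aestronglyMeasurable ?_
    filter_upwards with τ
    rw [Real.norm_eq_abs, abs_of_nonneg (sq_nonneg _)]
    calc ((as n τ).2)^2 ≤ ((as n τ).1)^2 + ((as n τ).2)^2 := le_add_of_nonneg_left (sq_nonneg _)
      _ = sq2 (as n τ) := rfl
  have hmem1 : ∀ n, MemLp (fun τ => (as n τ).1) 2 μ := fun n =>
    (memLp_two_iff_integrable_sq (measurable_fst.comp (hmeas n)).aestronglyMeasurable).mpr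
      (hsq1int n)
  have hmem2 : ∀ n, MemLp (fun τ => (as n τ).2) 2 μ := fun n =>
    (memLp_two_iff_integrable_sq (measurable_snd.comp (hmeas n)).aestronglyMeasurable).mpr
      (hsq2int n)
  have hintμK : ∀ n, ∫ τ, sq2 (as n τ) ∂μ ≤ K := by
    intro n
    have : ∫ τ, sq2 (as n τ) ∂μ = ∫ τ in (0:ℝ)..T, sq2 (as n τ) := by
      rw [intervalIntegral.integral_of_le hT0, hμdef]
    rw [this]
    exact hIK n
  have hnorm1 : ∀ n, ‖(hmem1 n).toLp _‖ ≤ Real.sqrt K := by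
    intro n
    apply norm_toLp_le_sqrt
    refine le_trans (integral_mono (hsq1int n) (hsqint n) ?_) (hintμK n)
    intro τ
    calc ((as n τ).1)^2 ≤ ((as n τ).1)^2 + ((as n τ).2)^2 := le_add_of_nonneg_right (sq_nonneg _)
      _ = sq2 (as n τ) := rfl
  have hnorm2 : ∀ n, ‖(hmem2 n).toLp _‖ ≤ Real.sqrt K := by
    intro n
    apply norm_toLp_le_sqrt
    refine le_trans (integral_mono (hsq2int n) (hsqint n) ?_) (hintμK n)
    intro τ
    calc ((as n τ).2)^2 ≤ ((as n τ).1)^2 + ((as n τ).2)^2 := le_add_of_nonneg_left (sq_nonneg _)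
      _ = sq2 (as n τ) := rfl
  -- weak limits
  haveI : Fact ((2:ℝ≥0∞) ≠ ⊤) := ⟨by norm_num⟩
  haveI hsc2 : SecondCountableTopology (Lp ℝ 2 μ) := MeasureTheory.Lp.SecondCountableTopology
  haveI : TopologicalSpace.SeparableSpace (Lp ℝ 2 μ) :=
    TopologicalSpace.SecondCountableTopology.to_separableSpace
  obtain ⟨φ1, hφ1, z1, hz1w⟩ := weak_cpt (fun n => (hmem1 n).toLp _) (Real.sqrt K) hnorm1
  obtain ⟨φ2, hφ2, z2, hz2w⟩ := weak_cpt (fun n => (hmem2 (φ1 n)).toLp _) (Real.sqrt K)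
    (fun n => hnorm2 _)
  set φ : ℕ → ℕ := fun n => φ1 (φ2 n) with hφdef
  have hφmono : StrictMono φ := hφ1.comp hφ2
  have hz1w' : ∀ w, Tendsto (fun n => ⟪w, (hmem1 (φ n)).toLp _⟫) atTop (𝓝 ⟪w, z1⟫) :=
    fun w => (hz1w w).comp hφ2.tendsto_atTop
  have hz2w' : ∀ w, Tendsto (fun n => ⟪w, (hmem2 (φ n)).toLp _⟫) atTop (𝓝 ⟪w, z2⟫) :=
    fun w => hz2w w
  -- restriction computation
  have hres : ∀ s : ℝ, s ≤ T → μ.restrict (Ioc 0 s) = volume.restrict (Ioc 0 s) := by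
    intro s hsT
    rw [hμdef, Measure.restrict_restrict measurableSet_Ioc]
    congr 1
    rw [Ioc_inter_Ioc]
    simp [min_eq_left hsT]
  -- identity for the first component of the limit
  have hF1 : ∀ s ∈ Icc (0:ℝ) T, (y s).1 = x.1 + ∫ τ in (0:ℝ)..s, (z1 : ℝ → ℝ) τ := by
    intro s hs
    have hμs : μ (Ioc 0 s) ≠ ⊤ := (measure_lt_top μ _).ne
    set inds : Lp ℝ 2 μ := indicatorConstLp 2 measurableSet_Ioc hμs (1:ℝ) with hinds
    have hseq : ∀ m, ⟪inds, (hmem1 m).toLp _⟫ = (ys m s).1 - (xs m).1 := by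
      intro m
      have h1 : ⟪inds, (hmem1 m).toLp _⟫ = ∫ τ in Ioc (0:ℝ) s, ((hmem1 m).toLp _) τ ∂μ :=
        MeasureTheory.L2.inner_indicatorConstLp_one measurableSet_Ioc hμs _
      have h2 : ∫ τ in Ioc (0:ℝ) s, ((hmem1 m).toLp _) τ ∂μ
          = ∫ τ in Ioc (0:ℝ) s, (as m τ).1 ∂μ := by
        apply setIntegral_congr_ae measurableSet_Ioc
        filter_upwards [(hmem1 m).coeFn_toLp] with τ hτ _
        exact hτ
      have h3 : ∫ τ in Ioc (0:ℝ) s, (as m τ).1 ∂μ = ∫ τ in (0:ℝ)..s, (as m τ).1 := by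
        rw [hres s hs.2, intervalIntegral.integral_of_le hs.1]
      have h4 := he1 m s hs
      rw [h1, h2, h3]
      linarith
    have hlim1 : Tendsto (fun n => ⟪inds, (hmem1 (φ n)).toLp _⟫) atTop (𝓝 ((y s).1 - x.1)) := by
      simp only [hseq]
      exact Tendsto.sub
        ((continuous_fst.tendsto _).comp ((hconv.tendsto_at hs).comp hφmono.tendsto_atTop))
        ((continuous_fst.tendsto _).comp (hxs.comp hφmono.tendsto_atTop))
    have huniq := tendsto_nhds_unique (hz1w' inds) hlim1
    have hzcalc : ⟪inds, z1⟫ = ∫ τ in (0:ℝ)..s, (z1 : ℝ → ℝ) τ := by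
      have h1 : ⟪inds, z1⟫ = ∫ τ in Ioc (0:ℝ) s, (z1 : ℝ → ℝ) τ ∂μ :=
        MeasureTheory.L2.inner_indicatorConstLp_one measurableSet_Ioc hμs _
      rw [h1, hres s hs.2, intervalIntegral.integral_of_le hs.1]
    rw [hzcalc] at huniq
    linarith
  -- weight machinery for second component
  obtain ⟨B, hB⟩ := hSc.exists_bound_of_continuousOn continuousOn_id
  have habscont : Continuous (fun t : ℝ => |t| ^ ν) :=
    (Real.continuous_rpow_const hν.le).comp continuous_abs
  have hfst_bd : ∀ p ∈ S, |p.1| ≤ B := by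
    intro p hp
    have h1 : ‖p.1‖ ≤ ‖p‖ := norm_fst_le p
    have h2 := hB p hp
    rw [Real.norm_eq_abs] at h1
    exact h1.trans h2
  have hB0 : 0 ≤ B := le_trans (abs_nonneg _) (hfst_bd x hx)
  have hWbd : ∀ p ∈ S, |p.1| ^ ν ≤ (B + 1) ^ ν := fun p hp =>
    Real.rpow_le_rpow (abs_nonneg _) (by linarith [hfst_bd p hp]) hν.le
  have hUC := (isCompact_Icc : IsCompact (Icc (-(B+1)) (B+1))).uniformContinuousOn_of_continuous
    habscont.continuousOn
  rw [Metric.uniformContinuousOn_iff] at hUC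
  have hWconv : ∀ ε > (0:ℝ), ∀ᶠ n in atTop,
      ∀ τ ∈ Icc (0:ℝ) T, |(|(ys n τ).1| ^ ν - |(y τ).1| ^ ν)| ≤ ε := by
    intro ε hε
    obtain ⟨δ, hδ0, hδ⟩ := hUC ε hε
    filter_upwards [Metric.tendstoUniformlyOn_iff.mp hconv δ hδ0] with n hn τ hτ
    have hyn : (ys n τ).1 ∈ Icc (-(B+1)) (B+1) := by
      have := hfst_bd _ (hmemS n τ hτ)
      constructor <;> linarith [abs_le.mp this |>.1, abs_le.mp this |>.2]
    have hyy : (y τ).1 ∈ Icc (-(B+1)) (B+1) := by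
      have := hfst_bd _ (hyS τ hτ)
      constructor <;> linarith [abs_le.mp this |>.1, abs_le.mp this |>.2]
    have hd : dist ((ys n τ).1) ((y τ).1) < δ := by
      have h1 : dist ((y τ).1) ((ys n τ).1) ≤ dist (y τ) (ys n τ) := by
        rw [Prod.dist_eq]; exact le_max_left _ _
      rw [dist_comm]
      exact lt_of_le_of_lt h1 (hn τ hτ)
    have := hδ _ hyn _ hyy hd
    rw [Real.dist_eq] at this
    exact this.le
  -- identity for the second component of the limit
  have hF2 : ∀ s ∈ Icc (0:ℝ) T,
      (y s).2 = x.2 + ∫ τ in (0:ℝ)..s, |(y τ).1| ^ ν * (z2 : ℝ → ℝ) τ := by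
    intro s hs
    have hymeas1 : AEStronglyMeasurable (fun τ => |(y τ).1| ^ ν) μ := by
      rw [hμdef]
      apply ContinuousOn.aestronglyMeasurable ?_ measurableSet_Ioc
      exact (habscont.comp_continuousOn
        (continuous_fst.comp_continuousOn hyc)).mono Ioc_subset_Icc_self
    have hWmem : MemLp (fun τ => (Ioc (0:ℝ) s).indicator (fun τ => |(y τ).1| ^ ν) τ) 2 μ := by
      apply MemLp.of_bound (hymeas1.indicator measurableSet_Ioc) ((B+1)^ν)
      filter_upwards [hμmem] with τ hτT
      by_cases hmem : τ ∈ Ioc (0:ℝ) s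
      · rw [Set.indicator_of_mem hmem, Real.norm_eq_abs,
          abs_of_nonneg (Real.rpow_nonneg (abs_nonneg _) _)]
        exact hWbd _ (hyS τ (Ioc_subset_Icc_self hτT))
      · rw [Set.indicator_of_notMem hmem]
        simpa using Real.rpow_nonneg (by linarith : (0:ℝ) ≤ B + 1) ν
    have hWnmeas : ∀ n, AEStronglyMeasurable (fun τ => |(ys n τ).1| ^ ν) μ := by
      intro n
      rw [hμdef]
      apply ContinuousOn.aestronglyMeasurable ?_ measurableSet_Ioc
      exact (habscont.comp_continuousOn
        (continuous_fst.comp_continuousOn (hycont n))).mono Ioc_subset_Icc_self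
    have hWn : ∀ n, MemLp (fun τ => (Ioc (0:ℝ) s).indicator (fun τ => |(ys n τ).1| ^ ν) τ) 2 μ := by
      intro n
      apply MemLp.of_bound ((hWnmeas n).indicator measurableSet_Ioc) ((B+1)^ν)
      filter_upwards [hμmem] with τ hτT
      by_cases hmem : τ ∈ Ioc (0:ℝ) s
      · rw [Set.indicator_of_mem hmem, Real.norm_eq_abs,
          abs_of_nonneg (Real.rpow_nonneg (abs_nonneg _) _)]
        exact hWbd _ (hmemS n τ (Ioc_subset_Icc_self hτT))
      · rw [Set.indicator_of_notMem hmem]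
        simpa using Real.rpow_nonneg (by linarith : (0:ℝ) ≤ B + 1) ν
    have hseq2 : ∀ m, ⟪(hWn m).toLp _, (hmem2 m).toLp _⟫ = (ys m s).2 - (xs m).2 := by
      intro m
      have h1 := inner_L2_eq (hWn m) ((hmem2 m).toLp _)
      have h2 : ∫ τ, (Ioc (0:ℝ) s).indicator (fun τ => |(ys m τ).1| ^ ν) τ
            * ((hmem2 m).toLp _ : ℝ → ℝ) τ ∂μ
          = ∫ τ, (Ioc (0:ℝ) s).indicator (fun τ => |(ys m τ).1| ^ ν * (as m τ).2) τ ∂μ := by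
        apply integral_congr_ae
        filter_upwards [(hmem2 m).coeFn_toLp] with τ hτ
        rw [hτ, Set.indicator_mul_left]
      have h3 : ∫ τ, (Ioc (0:ℝ) s).indicator (fun τ => |(ys m τ).1| ^ ν * (as m τ).2) τ ∂μ
          = ∫ τ in Ioc (0:ℝ) s, |(ys m τ).1| ^ ν * (as m τ).2 ∂μ :=
        integral_indicator measurableSet_Ioc
      have h4 : ∫ τ in Ioc (0:ℝ) s, |(ys m τ).1| ^ ν * (as m τ).2 ∂μ
          = ∫ τ in (0:ℝ)..s, |(ys m τ).1| ^ ν * (as m τ).2 := by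
        rw [hres s hs.2, intervalIntegral.integral_of_le hs.1]
      have h5 := he2 m s hs
      rw [h1, h2, h3, h4]
      linarith
    -- the difference of inner products tends to zero
    have hCμ : (0:ℝ) ≤ ((measureUnivNNReal μ : ℝ)) ^ ((2:ℝ≥0∞).toReal⁻¹) :=
      Real.rpow_nonneg (NNReal.coe_nonneg _) _
    set Cμ : ℝ := ((measureUnivNNReal μ : ℝ)) ^ ((2:ℝ≥0∞).toReal⁻¹) with hCμdef
    have hK0 : (0:ℝ) ≤ K := by
      have := le_trans (integral_nonneg fun τ => sq2_nonneg _) (hintμK 0)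
      exact this
    have hsqK : (0:ℝ) ≤ Real.sqrt K := Real.sqrt_nonneg _
    have hdiff : Tendsto (fun n => ⟪(hWn (φ n)).toLp _, (hmem2 (φ n)).toLp _⟫
        - ⟪hWmem.toLp _, (hmem2 (φ n)).toLp _⟫) atTop (𝓝 0) := by
      rw [NormedAddCommGroup.tendsto_nhds_zero]
      intro ε hε
      have hD : (0:ℝ) < Cμ * Real.sqrt K + 1 := by positivity
      have hε' : (0:ℝ) < ε / (Cμ * Real.sqrt K + 1) := by positivity
      filter_upwards [hφmono.tendsto_atTop.eventually (hWconv _ hε')] with n hn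
      have hsub : ⟪(hWn (φ n)).toLp _, (hmem2 (φ n)).toLp _⟫
          - ⟪hWmem.toLp _, (hmem2 (φ n)).toLp _⟫
          = ⟪(hWn (φ n)).toLp _ - hWmem.toLp _, (hmem2 (φ n)).toLp _⟫ :=
        (inner_sub_left _ _ _).symm
      have hnrm : ‖(hWn (φ n)).toLp _ - hWmem.toLp _‖ ≤ Cμ * (ε / (Cμ * Real.sqrt K + 1)) := by
        apply MeasureTheory.Lp.norm_le_of_ae_bound hε'.le
        filter_upwards [MeasureTheory.Lp.coeFn_sub ((hWn (φ n)).toLp _) (hWmem.toLp _),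
          (hWn (φ n)).coeFn_toLp, hWmem.coeFn_toLp, hμmem] with τ hc1 hc2 hc3 hτT
        rw [hc1, Pi.sub_apply, hc2, hc3]
        by_cases hmem : τ ∈ Ioc (0:ℝ) s
        · rw [Set.indicator_of_mem hmem, Set.indicator_of_mem hmem, Real.norm_eq_abs]
          exact hn τ (Ioc_subset_Icc_self hτT)
        · rw [Set.indicator_of_notMem hmem, Set.indicator_of_notMem hmem]
          simpa using hε'.le
      have hCS : ‖⟪(hWn (φ n)).toLp _ - hWmem.toLp _, (hmem2 (φ n)).toLp _⟫‖
          ≤ ‖(hWn (φ n)).toLp _ - hWmem.toLp _‖ * ‖(hmem2 (φ n)).toLp _‖ := by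
        rw [Real.norm_eq_abs]
        exact abs_real_inner_le_norm _ _
      rw [hsub]
      calc ‖⟪(hWn (φ n)).toLp _ - hWmem.toLp _, (hmem2 (φ n)).toLp _⟫‖
          ≤ ‖(hWn (φ n)).toLp _ - hWmem.toLp _‖ * ‖(hmem2 (φ n)).toLp _‖ := hCS
        _ ≤ (Cμ * (ε / (Cμ * Real.sqrt K + 1))) * Real.sqrt K := by
            apply mul_le_mul hnrm (hnorm2 _) (norm_nonneg _)
            positivity
        _ < ε := by
            have h1 : Cμ * (ε / (Cμ * Real.sqrt K + 1)) * Real.sqrt K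
                = (Cμ * Real.sqrt K) * (ε / (Cμ * Real.sqrt K + 1)) := by ring
            rw [h1]
            calc (Cμ * Real.sqrt K) * (ε / (Cμ * Real.sqrt K + 1))
                < (Cμ * Real.sqrt K + 1) * (ε / (Cμ * Real.sqrt K + 1)) := by
                  apply mul_lt_mul_of_pos_right (by linarith) (by positivity)
              _ = ε := by field_simp
    have hlimL : Tendsto (fun n => ⟪(hWn (φ n)).toLp _, (hmem2 (φ n)).toLp _⟫) atTop
        (𝓝 ⟪hWmem.toLp _, z2⟫) := by
      have h := hdiff.add (hz2w' (hWmem.toLp _))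
      rw [zero_add] at h
      refine h.congr fun n => ?_
      exact sub_add_cancel _ _
    have hlimR : Tendsto (fun n => ⟪(hWn (φ n)).toLp _, (hmem2 (φ n)).toLp _⟫) atTop
        (𝓝 ((y s).2 - x.2)) := by
      simp only [hseq2]
      exact Tendsto.sub
        ((continuous_snd.tendsto _).comp ((hconv.tendsto_at hs).comp hφmono.tendsto_atTop))
        ((continuous_snd.tendsto _).comp (hxs.comp hφmono.tendsto_atTop))
    have huniq := tendsto_nhds_unique hlimL hlimR
    have hwsz : ⟪hWmem.toLp _, z2⟫ = ∫ τ in (0:ℝ)..s, |(y τ).1| ^ ν * (z2 : ℝ → ℝ) τ := by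
      have h1 := inner_L2_eq hWmem z2
      have h2 : ∫ τ, (Ioc (0:ℝ) s).indicator (fun τ => |(y τ).1| ^ ν) τ * (z2 : ℝ → ℝ) τ ∂μ
          = ∫ τ, (Ioc (0:ℝ) s).indicator (fun τ => |(y τ).1| ^ ν * (z2 : ℝ → ℝ) τ) τ ∂μ := by
        apply integral_congr_ae
        filter_upwards with τ
        rw [← Set.indicator_mul_left]
      rw [h1, h2, integral_indicator measurableSet_Ioc, hres s hs.2,
        intervalIntegral.integral_of_le hs.1]
    rw [hwsz] at huniq
    linarith
  -- the limit trajectory is admissible with control (z1, z2)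
  have hz1meas : Measurable (z1 : ℝ → ℝ) := (Lp.stronglyMeasurable z1).measurable
  have hz2meas : Measurable (z2 : ℝ → ℝ) := (Lp.stronglyMeasurable z2).measurable
  have hz1int : Integrable (z1 : ℝ → ℝ) μ :=
    memLp_one_iff_integrable.mp ((Lp.memLp z1).mono_exponent (by norm_num))
  have hz2int : Integrable (z2 : ℝ → ℝ) μ :=
    memLp_one_iff_integrable.mp ((Lp.memLp z2).mono_exponent (by norm_num))
  have hymeas1' : AEStronglyMeasurable (fun τ => |(y τ).1| ^ ν) μ := by
    rw [hμdef]
    apply ContinuousOn.aestronglyMeasurable ?_ measurableSet_Ioc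
    exact (habscont.comp_continuousOn
      (continuous_fst.comp_continuousOn hyc)).mono Ioc_subset_Icc_self
  have hweight_int : Integrable (fun τ => |(y τ).1| ^ ν * (z2 : ℝ → ℝ) τ) μ := by
    apply Integrable.bdd_mul hz2int hymeas1'
    filter_upwards [hμmem] with τ hτT
    rw [Real.norm_eq_abs, abs_of_nonneg (Real.rpow_nonneg (abs_nonneg _) _)]
    exact hWbd _ (hyS τ (Ioc_subset_Icc_self hτT))
  have hGmem : ((y, fun τ => ((z1 : ℝ → ℝ) τ, (z2 : ℝ → ℝ) τ)) :
      (ℝ → ℝ × ℝ) × (ℝ → ℝ × ℝ)) ∈ Gamma ν S 0 T x := by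
    show Admissible ν S 0 T x y (fun τ => ((z1 : ℝ → ℝ) τ, (z2 : ℝ → ℝ) τ)) ∧
      InL2 (fun τ => ((z1 : ℝ → ℝ) τ, (z2 : ℝ → ℝ) τ)) 0 T
    constructor
    · refine ⟨hz1meas.prodMk hz2meas, ?_, ?_, ?_, ?_, hyS⟩
      · exact (intervalIntegrable_iff_integrableOn_Ioc_of_le hT0).mpr hz1int
      · exact (intervalIntegrable_iff_integrableOn_Ioc_of_le hT0).mpr hweight_int
      · exact hF1
      · exact hF2
    · show IntervalIntegrable (fun τ => sq2 ((z1 : ℝ → ℝ) τ, (z2 : ℝ → ℝ) τ)) volume 0 T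
      have h1 : Integrable (fun τ => ((z1 : ℝ → ℝ) τ)^2) μ :=
        (memLp_two_iff_integrable_sq (Lp.aestronglyMeasurable z1)).mp (Lp.memLp z1)
      have h2 : Integrable (fun τ => ((z2 : ℝ → ℝ) τ)^2) μ :=
        (memLp_two_iff_integrable_sq (Lp.aestronglyMeasurable z2)).mp (Lp.memLp z2)
      have h3 := h1.add h2
      exact (intervalIntegrable_iff_integrableOn_Ioc_of_le hT0).mpr h3
  have hyconst : ∀ u ∈ Icc (0:ℝ) T, y u = x :=
    traj_const_of_unreachable hT0 hx hun hGmem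
  -- the optimal pair
  refine ⟨fun _ => (0:ℝ×ℝ), ?_⟩
  show ((y, fun _ => (0:ℝ×ℝ)) : (ℝ → ℝ × ℝ) × (ℝ → ℝ × ℝ)) ∈ Gamma ν S 0 T x ∧
    ∀ q ∈ Gamma ν S 0 T x, cost l g 0 T y (fun _ => (0:ℝ×ℝ)) ≤ cost l g 0 T q.1 q.2
  constructor
  · show Admissible ν S 0 T x y (fun _ => (0:ℝ×ℝ)) ∧ InL2 (fun _ => (0:ℝ×ℝ)) 0 T
    constructor
    · refine ⟨measurable_const, ?_, ?_, ?_, ?_, hyS⟩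
      · exact intervalIntegrable_const (μ := volume)
      · simpa using intervalIntegrable_const (c := (0:ℝ)) (μ := volume) (a := (0:ℝ)) (b := T)
      · intro s hs
        rw [hyconst s hs]
        simp
      · intro s hs
        rw [hyconst s hs]
        simp
    · show IntervalIntegrable (fun _ => sq2 (0:ℝ×ℝ)) volume 0 T
      exact intervalIntegrable_const
  · intro q hq
    have hqconst : ∀ u ∈ Icc (0:ℝ) T, q.1 u = x :=
      traj_const_of_unreachable hT0 hx hun hq
    obtain ⟨⟨hqm, hqi1, hqi2, hqe1, hqe2, hqmem⟩, hqL2p⟩ := hq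
    have hqL2 : IntervalIntegrable (fun τ => sq2 (q.2 τ)) volume 0 T := hqL2p
    have hlx : IntervalIntegrable (fun τ => l x τ) volume 0 T := by
      apply ContinuousOn.intervalIntegrable
      rw [uIcc_of_le hT0]
      exact hl.comp (continuousOn_const.prodMk continuousOn_id) (fun τ hτ => ⟨hx, hτ⟩)
    have hcosty : cost l g 0 T y (fun _ => (0:ℝ×ℝ)) = (∫ τ in (0:ℝ)..T, l x τ) + g x := by
      have h1 : cost l g 0 T y (fun _ => (0:ℝ×ℝ))
          = (∫ τ in (0:ℝ)..T, (sq2 (0:ℝ×ℝ) / 2 + l (y τ) τ)) + g (y T) := rfl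
      rw [h1, hyconst T (right_mem_Icc.mpr hT0)]
      congr 1
      apply intervalIntegral.integral_congr
      intro τ hτ
      rw [uIcc_of_le hT0] at hτ
      show sq2 (0:ℝ×ℝ) / 2 + l (y τ) τ = l x τ
      rw [hyconst τ hτ]
      simp [sq2]
    have hcostq : (∫ τ in (0:ℝ)..T, l x τ) + g x ≤ cost l g 0 T q.1 q.2 := by
      have h1 : cost l g 0 T q.1 q.2
          = (∫ τ in (0:ℝ)..T, (sq2 (q.2 τ) / 2 + l (q.1 τ) τ)) + g (q.1 T) := rfl
      have h2 : ∫ τ in (0:ℝ)..T, (sq2 (q.2 τ) / 2 + l (q.1 τ) τ)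
          = ∫ τ in (0:ℝ)..T, (sq2 (q.2 τ) / 2 + l x τ) := by
        apply intervalIntegral.integral_congr
        intro τ hτ
        rw [uIcc_of_le hT0] at hτ
        show sq2 (q.2 τ) / 2 + l (q.1 τ) τ = sq2 (q.2 τ) / 2 + l x τ
        rw [hqconst τ hτ]
      have h3 : ∫ τ in (0:ℝ)..T, (sq2 (q.2 τ) / 2 + l x τ)
          = (∫ τ in (0:ℝ)..T, sq2 (q.2 τ)) / 2 + ∫ τ in (0:ℝ)..T, l x τ := by
        rw [intervalIntegral.integral_add (hqL2.div_const 2) hlx, intervalIntegral.integral_div]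
      have h4 : 0 ≤ ∫ τ in (0:ℝ)..T, sq2 (q.2 τ) :=
        intervalIntegral.integral_nonneg hT0 (fun τ _ => sq2_nonneg _)
      rw [h1, h2, h3, hqconst T (right_mem_Icc.mpr hT0)]
      linarith
    show cost l g 0 T y (fun _ => (0:ℝ×ℝ)) ≤ cost l g 0 T q.1 q.2
    rw [hcosty]
    exact hcostq
end
end
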